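/- arXiv:1603.00580 — 2 statements merged into one kernel-verified Lean document; each statement's English description precedes it below -/
import Mathlib

section
/- Suppose all points of S = R ∪ B ∪ P lie on a common circle. Then in a minimum red-blue-purple spanning graph of (R,B,P), no purple edge crosses any other edge; that is, for every purple edge uv and every edge wx with {u,v} ≠ {w,x}, the segments uv and wx do not intersect in a point that lies in the relative interior of both segments. -/
open scoped Classical

noncomputable section

/-- The Euclidean plane. -/
abbrev Pt : Type := EuclideanSpace ℝ (Fin 2)

/-- The simple graph on the plane whose edge set is the finite set `E`. -/
def graphOf (E : Finset (Sym2 Pt)) : SimpleGraph Pt where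
  Adj x y := x ≠ y ∧ s(x, y) ∈ E
  symm := ⟨fun x y ⟨hne, he⟩ => ⟨hne.symm, by rwa [Sym2.eq_swap]⟩⟩
  loopless := ⟨fun x ⟨hne, _⟩ => hne rfl⟩

/-- Euclidean length of an edge. -/
def edgeLen (e : Sym2 Pt) : ℝ :=
  Sym2.lift ⟨fun x y => dist x y, fun _ _ => dist_comm _ _⟩ e

/-- Total Euclidean length of a finite edge set. -/
def weight (E : Finset (Sym2 Pt)) : ℝ := ∑ e ∈ E, edgeLen e

/-- `E` is the edge set of a red-blue-purple spanning graph of `(R, B, P)`. -/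
def IsRBP (R B P : Finset Pt) (E : Finset (Sym2 Pt)) : Prop :=
  (∀ e ∈ E, ¬ e.IsDiag) ∧
  (∀ e ∈ E, ∀ x ∈ e, x ∈ R ∪ B ∪ P) ∧
  ((graphOf E).induce (↑(R ∪ P) : Set Pt)).Connected ∧
  ((graphOf E).induce (↑(B ∪ P) : Set Pt)).Connected

/-- `E` is the edge set of a minimum red-blue-purple spanning graph of `(R, B, P)`. -/
def IsMinRBP (R B P : Finset Pt) (E : Finset (Sym2 Pt)) : Prop :=
  IsRBP R B P E ∧ ∀ E', IsRBP R B P E' → weight E ≤ weight E'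

/-- Two segments cross: they meet in a point in the relative interior (open
segment) of both. -/
def Crosses (u v w x : Pt) : Prop :=
  ∃ z : Pt, z ∈ openSegment ℝ u v ∧ z ∈ openSegment ℝ w x

namespace RBPAux

/-! ### Weight basics -/

lemma edgeLen_mk (a b : Pt) : edgeLen s(a,b) = dist a b := rfl

lemma edgeLen_nonneg (e : Sym2 Pt) : 0 ≤ edgeLen e := by
  induction e using Sym2.ind with
  | _ a b => rw [edgeLen_mk]; exact dist_nonneg

lemma weight_erase {E : Finset (Sym2 Pt)} {e : Sym2 Pt} (h : e ∈ E) :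
    weight (E.erase e) = weight E - edgeLen e := Finset.sum_erase_eq_sub h

lemma weight_insert_le (E : Finset (Sym2 Pt)) (e : Sym2 Pt) :
    weight (insert e E) ≤ edgeLen e + weight E := by
  by_cases h : e ∈ E
  · rw [Finset.insert_eq_self.2 h]
    linarith [edgeLen_nonneg e]
  · rw [weight, Finset.sum_insert h]
    exact le_of_eq rfl

/-! ### Graph surgery -/

/-- The induced graph on `V` of the graph with edge set `E`. -/
def iG (V : Set Pt) (E : Finset (Sym2 Pt)) : SimpleGraph V := (graphOf E).induce V

lemma iG_mono {V : Set Pt} {E F : Finset (Sym2 Pt)} (h : ∀ e ∈ E, e ∈ F) :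
    iG V E ≤ iG V F := by
  intro p q hpq
  exact ⟨hpq.1, h _ hpq.2⟩

lemma sym2_lift {V : Set Pt} (p q : V) {a b : Pt} (ha : a ∈ V) (hb : b ∈ V)
    (h : s((p : Pt), (q : Pt)) = s(a, b)) :
    s(p, q) = s((⟨a, ha⟩ : V), (⟨b, hb⟩ : V)) := by
  rw [Sym2.eq_iff] at h ⊢
  rcases h with ⟨h1, h2⟩ | ⟨h1, h2⟩
  · exact Or.inl ⟨Subtype.ext h1, Subtype.ext h2⟩
  · exact Or.inr ⟨Subtype.ext h1, Subtype.ext h2⟩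

open SimpleGraph

lemma reach_or {α : Type*} {G H : SimpleGraph α} {a b c d : α}
    (h : ∀ p q, G.Adj p q → H.Adj p q ∨ s(p,q) = s(a,b) ∨ s(p,q) = s(c,d)) :
    ∀ {y t : α}, G.Reachable y t →
      H.Reachable y t ∨ H.Reachable y a ∨ H.Reachable y b ∨ H.Reachable y c ∨ H.Reachable y d := by
  intro y t hyt
  obtain ⟨W⟩ := hyt
  induction W with
  | nil => exact Or.inl (Reachable.refl _)
  | cons hadj W ih =>
    rcases h _ _ hadj with hH | he | he
    · rcases ih with h1 | h1 | h1 | h1 | h1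
      · exact Or.inl (hH.reachable.trans h1)
      · exact Or.inr (Or.inl (hH.reachable.trans h1))
      · exact Or.inr (Or.inr (Or.inl (hH.reachable.trans h1)))
      · exact Or.inr (Or.inr (Or.inr (Or.inl (hH.reachable.trans h1))))
      · exact Or.inr (Or.inr (Or.inr (Or.inr (hH.reachable.trans h1))))
    · rcases Sym2.eq_iff.1 he with ⟨rfl, rfl⟩ | ⟨rfl, rfl⟩
      · exact Or.inr (Or.inl (Reachable.refl _))
      · exact Or.inr (Or.inr (Or.inl (Reachable.refl _)))
    · rcases Sym2.eq_iff.1 he with ⟨rfl, rfl⟩ | ⟨rfl, rfl⟩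
      · exact Or.inr (Or.inr (Or.inr (Or.inl (Reachable.refl _))))
      · exact Or.inr (Or.inr (Or.inr (Or.inr (Reachable.refl _))))

lemma reach_decomp {α : Type*} {G H : SimpleGraph α} {a b : α}
    (h : ∀ p q, G.Adj p q → H.Adj p q ∨ s(p,q) = s(a,b)) :
    ∀ {y t : α}, G.Reachable y t →
      H.Reachable y t ∨ (H.Reachable y a ∧ H.Reachable b t) ∨
        (H.Reachable y b ∧ H.Reachable a t) := by
  intro y t hyt
  obtain ⟨W⟩ := hyt
  induction W with
  | nil => exact Or.inl (Reachable.refl _)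
  | cons hadj W ih =>
    rcases h _ _ hadj with hH | he
    · rcases ih with h1 | ⟨h1, h2⟩ | ⟨h1, h2⟩
      · exact Or.inl (hH.reachable.trans h1)
      · exact Or.inr (Or.inl ⟨hH.reachable.trans h1, h2⟩)
      · exact Or.inr (Or.inr ⟨hH.reachable.trans h1, h2⟩)
    · rcases Sym2.eq_iff.1 he with ⟨rfl, rfl⟩ | ⟨rfl, rfl⟩
      · rcases ih with h1 | ⟨h1, h2⟩ | ⟨h1, h2⟩
        · exact Or.inr (Or.inl ⟨Reachable.refl _, h1⟩)
        · exact Or.inl (h1.symm.trans h2)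
        · exact Or.inl h2
      · rcases ih with h1 | ⟨h1, h2⟩ | ⟨h1, h2⟩
        · exact Or.inr (Or.inr ⟨Reachable.refl _, h1⟩)
        · exact Or.inl h2
        · exact Or.inl (h1.symm.trans h2)

lemma conn_of_hub {α : Type*} {H : SimpleGraph α} {a b c d : α}
    (hall : ∀ y, H.Reachable y a ∨ H.Reachable y b ∨ H.Reachable y c ∨ H.Reachable y d)
    (hab : H.Reachable a b) (hac : H.Reachable a c) (had : H.Reachable a d) :
    H.Connected := by
  rw [connected_iff_exists_forall_reachable]
  refine ⟨a, fun y => ?_⟩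
  rcases hall y with h | h | h | h
  · exact h.symm
  · exact (h.trans hab.symm).symm
  · exact (h.trans hac.symm).symm
  · exact (h.trans had.symm).symm

lemma conn_move {V : Set Pt} {E F : Finset (Sym2 Pt)} {u v w x : Pt}
    (hu : u ∈ V) (hv : v ∈ V) (hw : w ∈ V) (hx : x ∈ V)
    (hconn : (iG V E).Connected)
    (hsub : ∀ e ∈ E, e ∈ F ∨ e = s(u,v) ∨ e = s(w,x))
    (r1 : (iG V F).Reachable ⟨u,hu⟩ ⟨v,hv⟩)
    (r2 : (iG V F).Reachable ⟨u,hu⟩ ⟨w,hw⟩)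
    (r3 : (iG V F).Reachable ⟨u,hu⟩ ⟨x,hx⟩) :
    (iG V F).Connected := by
  have h : ∀ p q : V, (iG V E).Adj p q → (iG V F).Adj p q ∨
      s(p,q) = s((⟨u,hu⟩ : V), (⟨v,hv⟩ : V)) ∨ s(p,q) = s((⟨w,hw⟩ : V), (⟨x,hx⟩ : V)) := by
    intro p q hpq
    rcases hsub _ hpq.2 with hm | hm | hm
    · exact Or.inl ⟨hpq.1, hm⟩
    · exact Or.inr (Or.inl (sym2_lift _ _ _ _ hm))
    · exact Or.inr (Or.inr (sym2_lift _ _ _ _ hm))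
  refine conn_of_hub (a := (⟨u,hu⟩ : V)) (b := (⟨v,hv⟩ : V)) (c := (⟨w,hw⟩ : V))
    (d := (⟨x,hx⟩ : V)) (fun y => ?_) r1 r2 r3
  rcases reach_or h (hconn.preconnected y ⟨u,hu⟩) with h1 | h1 | h1 | h1 | h1
  · exact Or.inl h1
  · exact Or.inl h1
  · exact Or.inr (Or.inl h1)
  · exact Or.inr (Or.inr (Or.inl h1))
  · exact Or.inr (Or.inr (Or.inr h1))

lemma conn_invisible {V : Set Pt} {E F : Finset (Sym2 Pt)} {w x : Pt}
    (hconn : (iG V E).Connected)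
    (hsub : ∀ e ∈ E, e ∈ F ∨ e = s(w,x))
    (hvis : w ∉ V ∨ x ∉ V) : (iG V F).Connected := by
  refine hconn.mono ?_
  intro p q hpq
  rcases hsub _ hpq.2 with hm | hm
  · exact ⟨hpq.1, hm⟩
  · exfalso
    rcases Sym2.eq_iff.1 hm with ⟨h1, h2⟩ | ⟨h1, h2⟩
    · rcases hvis with h | h
      · exact h (h1 ▸ p.2)
      · exact h (h2 ▸ q.2)
    · rcases hvis with h | h
      · exact h (h2 ▸ q.2)
      · exact h (h1 ▸ p.2)

lemma conn_fixmove {V : Set Pt} {E : Finset (Sym2 Pt)} {u v w x p : Pt}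
    (hu : u ∈ V) (hv : v ∈ V) (hw : w ∈ V) (hx : x ∈ V)
    (hconn : (iG V E).Connected)
    (huvE : s(u,v) ∈ E) (hsne : s(u,v) ≠ s(w,x))
    (huv : u ≠ v) (hpx : p ≠ x) (hp : p = u ∨ p = v)
    (hside : (iG V (E.erase s(w,x))).Reachable ⟨u,hu⟩ ⟨w,hw⟩) :
    (iG V (insert s(p,x) (E.erase s(w,x)))).Connected := by
  set F := insert s(p,x) (E.erase s(w,x)) with hF
  have hEsub : ∀ e ∈ E.erase s(w,x), e ∈ F := fun e he => Finset.mem_insert_of_mem he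
  have hsub : ∀ e ∈ E, e ∈ F ∨ e = s(u,v) ∨ e = s(w,x) := by
    intro e he
    by_cases hewx : e = s(w,x)
    · exact Or.inr (Or.inr hewx)
    · exact Or.inl (hEsub _ (Finset.mem_erase.2 ⟨hewx, he⟩))
  have r1 : (iG V F).Reachable ⟨u,hu⟩ ⟨v,hv⟩ := by
    refine SimpleGraph.Adj.reachable ?_
    exact ⟨huv, hEsub _ (Finset.mem_erase.2 ⟨hsne, huvE⟩)⟩
  have r2 : (iG V F).Reachable ⟨u,hu⟩ ⟨w,hw⟩ := hside.mono (iG_mono hEsub)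
  have r3 : (iG V F).Reachable ⟨u,hu⟩ ⟨x,hx⟩ := by
    rcases hp with rfl | rfl
    · exact SimpleGraph.Adj.reachable ⟨hpx, Finset.mem_insert_self _ _⟩
    · exact r1.trans (SimpleGraph.Adj.reachable ⟨hpx, Finset.mem_insert_self _ _⟩)
  exact conn_move hu hv hw hx hconn hsub r1 r2 r3

lemma reach_split {V : Set Pt} {F H : Finset (Sym2 Pt)} {a b : Pt}
    (ha : a ∈ V) (hb : b ∈ V)
    (hH : ∀ e ∈ F, e ∈ H ∨ e = s(a,b)) {y t : Pt} (hy : y ∈ V) (ht : t ∈ V)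
    (hr : (iG V F).Reachable ⟨y,hy⟩ ⟨t,ht⟩) :
    (iG V H).Reachable ⟨y,hy⟩ ⟨t,ht⟩ ∨
      ((iG V H).Reachable ⟨y,hy⟩ ⟨a,ha⟩ ∧ (iG V H).Reachable ⟨b,hb⟩ ⟨t,ht⟩) ∨
      ((iG V H).Reachable ⟨y,hy⟩ ⟨b,hb⟩ ∧ (iG V H).Reachable ⟨a,ha⟩ ⟨t,ht⟩) := by
  have h : ∀ p q : V, (iG V F).Adj p q → (iG V H).Adj p q ∨
      s(p,q) = s((⟨a,ha⟩ : V), (⟨b,hb⟩ : V)) := by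
    intro p q hpq
    rcases hH _ hpq.2 with hm | hm
    · exact Or.inl ⟨hpq.1, hm⟩
    · exact Or.inr (sym2_lift _ _ _ _ hm)
  exact reach_decomp h hr

lemma side_or {V : Set Pt} {E : Finset (Sym2 Pt)} {u w x : Pt}
    (hu : u ∈ V) (hw : w ∈ V) (hx : x ∈ V) (hconn : (iG V E).Connected) :
    (iG V (E.erase s(w,x))).Reachable ⟨u,hu⟩ ⟨w,hw⟩ ∨
      (iG V (E.erase s(w,x))).Reachable ⟨u,hu⟩ ⟨x,hx⟩ := by
  have h : ∀ p q : V, (iG V E).Adj p q → (iG V (E.erase s(w,x))).Adj p q ∨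
      s(p,q) = s((⟨w,hw⟩ : V), (⟨x,hx⟩ : V)) ∨ s(p,q) = s((⟨w,hw⟩ : V), (⟨x,hx⟩ : V)) := by
    intro p q hpq
    by_cases he : s((p : Pt), (q : Pt)) = s(w,x)
    · exact Or.inr (Or.inl (sym2_lift _ _ _ _ he))
    · exact Or.inl ⟨hpq.1, Finset.mem_erase.2 ⟨he, hpq.2⟩⟩
  rcases reach_or h (hconn.preconnected ⟨u,hu⟩ ⟨w,hw⟩) with h1 | h1 | h1 | h1 | h1
  · exact Or.inl h1
  · exact Or.inl h1
  · exact Or.inr h1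
  · exact Or.inl h1
  · exact Or.inr h1

lemma pairP1_conn {V : Set Pt} {E : Finset (Sym2 Pt)} {u v w x : Pt}
    (hu : u ∈ V) (hv : v ∈ V) (hw : w ∈ V) (hx : x ∈ V)
    (hconn : (iG V E).Connected) (huw : u ≠ w) (hvx : v ≠ x)
    (hfact : (iG V ((E.erase s(u,v)).erase s(w,x))).Reachable ⟨u,hu⟩ ⟨x,hx⟩ ∨
      (iG V ((E.erase s(u,v)).erase s(w,x))).Reachable ⟨v,hv⟩ ⟨w,hw⟩) :
    (iG V (insert s(u,w) (insert s(v,x) ((E.erase s(u,v)).erase s(w,x))))).Connected := by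
  set H := (E.erase s(u,v)).erase s(w,x) with hHdef
  set F := insert s(u,w) (insert s(v,x) H) with hFdef
  have hHsub : ∀ e ∈ H, e ∈ F := fun e he =>
    Finset.mem_insert_of_mem (Finset.mem_insert_of_mem he)
  have M : iG V H ≤ iG V F := iG_mono hHsub
  have hsub : ∀ e ∈ E, e ∈ F ∨ e = s(u,v) ∨ e = s(w,x) := by
    intro e he
    by_cases h1 : e = s(u,v)
    · exact Or.inr (Or.inl h1)
    by_cases h2 : e = s(w,x)
    · exact Or.inr (Or.inr h2)
    · exact Or.inl (hHsub _ (Finset.mem_erase.2 ⟨h2, Finset.mem_erase.2 ⟨h1, he⟩⟩))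
  have auw : (iG V F).Adj ⟨u,hu⟩ ⟨w,hw⟩ := ⟨huw, Finset.mem_insert_self _ _⟩
  have avx : (iG V F).Adj ⟨v,hv⟩ ⟨x,hx⟩ :=
    ⟨hvx, Finset.mem_insert_of_mem (Finset.mem_insert_self _ _)⟩
  rcases hfact with hux | hvw
  · have r3 := hux.mono M
    have r1 := r3.trans avx.reachable.symm
    exact conn_move hu hv hw hx hconn hsub r1 auw.reachable r3
  · have r1 := auw.reachable.trans (hvw.mono M).symm
    have r3 := r1.trans avx.reachable
    exact conn_move hu hv hw hx hconn hsub r1 auw.reachable r3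

lemma pairP2_conn {V : Set Pt} {E : Finset (Sym2 Pt)} {u v w x : Pt}
    (hu : u ∈ V) (hv : v ∈ V) (hw : w ∈ V) (hx : x ∈ V)
    (hconn : (iG V E).Connected) (hux : u ≠ x) (hvw : v ≠ w)
    (hfact : (iG V ((E.erase s(u,v)).erase s(w,x))).Reachable ⟨v,hv⟩ ⟨x,hx⟩ ∨
      (iG V ((E.erase s(u,v)).erase s(w,x))).Reachable ⟨u,hu⟩ ⟨w,hw⟩) :
    (iG V (insert s(u,x) (insert s(v,w) ((E.erase s(u,v)).erase s(w,x))))).Connected := by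
  set H := (E.erase s(u,v)).erase s(w,x) with hHdef
  set F := insert s(u,x) (insert s(v,w) H) with hFdef
  have hHsub : ∀ e ∈ H, e ∈ F := fun e he =>
    Finset.mem_insert_of_mem (Finset.mem_insert_of_mem he)
  have M : iG V H ≤ iG V F := iG_mono hHsub
  have hsub : ∀ e ∈ E, e ∈ F ∨ e = s(u,v) ∨ e = s(w,x) := by
    intro e he
    by_cases h1 : e = s(u,v)
    · exact Or.inr (Or.inl h1)
    by_cases h2 : e = s(w,x)
    · exact Or.inr (Or.inr h2)
    · exact Or.inl (hHsub _ (Finset.mem_erase.2 ⟨h2, Finset.mem_erase.2 ⟨h1, he⟩⟩))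
  have aux' : (iG V F).Adj ⟨u,hu⟩ ⟨x,hx⟩ := ⟨hux, Finset.mem_insert_self _ _⟩
  have avw : (iG V F).Adj ⟨v,hv⟩ ⟨w,hw⟩ :=
    ⟨hvw, Finset.mem_insert_of_mem (Finset.mem_insert_self _ _)⟩
  rcases hfact with hvx | huw
  · have r1 := aux'.reachable.trans (hvx.mono M).symm
    have r2 := r1.trans avw.reachable
    exact conn_move hu hv hw hx hconn hsub r1 r2 aux'.reachable
  · have r2 := huw.mono M
    have r1 := r2.trans avw.reachable.symm
    exact conn_move hu hv hw hx hconn hsub r1 r2 aux'.reachable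

/-! ### Geometry on the circle -/

open scoped RealInnerProductSpace

/-- A line meets the circle in at most the two given points. -/
lemma circle_line {ctr : Pt} {r : ℝ} {a c : Pt} (hac : a ≠ c)
    (ha : dist a ctr = r) (hc : dist c ctr = r) (t : ℝ)
    (h : dist (a + t • (c - a)) ctr = r) : t = 0 ∨ t = 1 := by
  have hD : (c - a) ≠ 0 := sub_ne_zero.2 (Ne.symm hac)
  have hDpos : 0 < ‖c - a‖ ^ 2 := by
    have := norm_pos_iff.2 hD
    positivity
  have e1 : ‖a - ctr‖ = r := by rw [← dist_eq_norm]; exact ha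
  have e2 : ‖(a - ctr) + (c - a)‖ = r := by
    have : a - ctr + (c - a) = c - ctr := by abel
    rw [this, ← dist_eq_norm]; exact hc
  have e3 : ‖(a - ctr) + t • (c - a)‖ = r := by
    have : a + t • (c - a) - ctr = (a - ctr) + t • (c - a) := by abel
    rw [← this, ← dist_eq_norm]; exact h
  have sq2 := norm_add_sq_real (a - ctr) (c - a)
  have sq3 := norm_add_sq_real (a - ctr) (t • (c - a))
  rw [e2] at sq2
  rw [e3] at sq3
  rw [real_inner_smul_right, norm_smul, Real.norm_eq_abs] at sq3
  have habs : (|t| * ‖c - a‖) ^ 2 = t ^ 2 * ‖c - a‖ ^ 2 := by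
    rw [mul_pow, sq_abs]
  rw [habs] at sq3
  rw [e1] at sq2 sq3
  have key : t * (t - 1) * ‖c - a‖ ^ 2 = 0 := by nlinarith [sq2, sq3]
  rcases mul_eq_zero.1 key with h0 | h0
  · rcases mul_eq_zero.1 h0 with h1 | h1
    · exact Or.inl h1
    · exact Or.inr (by linarith)
  · exact absurd h0 (ne_of_gt hDpos)

lemma cross_core {ctr : Pt} {r : ℝ} {a c p : Pt} (hac : a ≠ c)
    (ha : dist a ctr = r) (hc : dist c ctr = r) (hp : dist p ctr = r)
    {b d : ℝ} (hb : 0 < b) (hd : 0 < d) (h : b • (c - a) = d • (p - a)) : p = c := by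
  have hp' : p = a + (d⁻¹ * b) • (c - a) := by
    have : p - a = d⁻¹ • (b • (c - a)) := by
      rw [h, smul_smul, inv_mul_cancel₀ (ne_of_gt hd), one_smul]
    rw [mul_smul, ← this]; abel
  have := circle_line hac ha hc (d⁻¹ * b) (by rw [← hp']; exact hp)
  rcases this with h0 | h1
  · exfalso
    have : d⁻¹ * b > 0 := by positivity
    linarith
  · rw [hp', h1, one_smul]; abel

lemma seg_delta {a b : ℝ} {u v z : Pt} (hab : a + b = 1) (hz : a • u + b • v = z) :
    z - u = b • (v - u) := by
  have ha : a = 1 - b := by linarith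
  rw [← hz, ha, sub_smul, one_smul, smul_sub]
  abel

set_option maxHeartbeats 1000000 in
/-- Chord comparison: if chords uv and wx cross, then one of wv, xv is shorter than uv. -/
lemma chord_short {ctr : Pt} {r : ℝ} {u v w x : Pt}
    (hcu : dist u ctr = r) (hcv : dist v ctr = r) (hcw : dist w ctr = r)
    (hcx : dist x ctr = r) (huv : u ≠ v) (hcr : Crosses u v w x) :
    dist w v < dist u v ∨ dist x v < dist u v := by
  obtain ⟨z, hz1, hz2⟩ := hcr
  obtain ⟨a, b, ha, hb, hab, hz⟩ := hz1
  obtain ⟨c, d, hc, hd, hcd, hz'⟩ := hz2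
  by_contra hcon
  push_neg at hcon
  obtain ⟨h1, h2⟩ := hcon
  have gsq : ∀ p : Pt, dist p ctr = r →
      dist p v ^ 2 = 2 * r ^ 2 - 2 * ⟪p - ctr, v - ctr⟫ := by
    intro p hp
    have : p - v = (p - ctr) - (v - ctr) := by abel
    rw [dist_eq_norm, this, norm_sub_sq_real, ← dist_eq_norm p ctr, ← dist_eq_norm v ctr,
      hp, hcv]
    ring
  have gu := gsq u hcu
  have gv := gsq w hcw
  have gx := gsq x hcx
  have hduv : 0 < dist u v := dist_pos.2 huv
  have hsq1 : dist u v ^ 2 ≤ dist w v ^ 2 := by nlinarith [dist_nonneg (x := w) (y := v)]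
  have hsq2 : dist u v ^ 2 ≤ dist x v ^ 2 := by nlinarith [dist_nonneg (x := x) (y := v)]
  have hgw : ⟪w - ctr, v - ctr⟫ ≤ ⟪u - ctr, v - ctr⟫ := by nlinarith
  have hgx : ⟪x - ctr, v - ctr⟫ ≤ ⟪u - ctr, v - ctr⟫ := by nlinarith
  have hgv : ⟪v - ctr, v - ctr⟫ = r ^ 2 := by
    rw [real_inner_self_eq_norm_sq, ← dist_eq_norm]
    rw [hcv]
  have hgu_lt : ⟪u - ctr, v - ctr⟫ < r ^ 2 := by nlinarith
  have hzc1 : z - ctr = a • (u - ctr) + b • (v - ctr) := by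
    have h' : a • (u - ctr) + b • (v - ctr) = a • u + b • v - (a + b) • ctr := by
      rw [smul_sub, smul_sub, add_smul]; abel
    rw [h', hab, one_smul, hz]
  have hzc2 : z - ctr = c • (w - ctr) + d • (x - ctr) := by
    have h' : c • (w - ctr) + d • (x - ctr) = c • w + d • x - (c + d) • ctr := by
      rw [smul_sub, smul_sub, add_smul]; abel
    rw [h', hcd, one_smul, hz']
  have g1 : ⟪z - ctr, v - ctr⟫ = a * ⟪u - ctr, v - ctr⟫ + b * ⟪v - ctr, v - ctr⟫ := by
    rw [hzc1, inner_add_left, real_inner_smul_left, real_inner_smul_left]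
  have g2 : ⟪z - ctr, v - ctr⟫ = c * ⟪w - ctr, v - ctr⟫ + d * ⟪x - ctr, v - ctr⟫ := by
    rw [hzc2, inner_add_left, real_inner_smul_left, real_inner_smul_left]
  rw [hgv] at g1
  nlinarith [mul_le_mul_of_nonneg_left hgw (le_of_lt hc),
    mul_le_mul_of_nonneg_left hgx (le_of_lt hd)]

set_option maxHeartbeats 1000000 in
/-- Strict quadrilateral inequality for crossing chords. -/
lemma pairing_lt {ctr : Pt} {r : ℝ} {u v w x : Pt}
    (hcu : dist u ctr = r) (hcv : dist v ctr = r) (hcw : dist w ctr = r)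
    (hcx : dist x ctr = r) (huv : u ≠ v) (hwv : w ≠ v) (hwu : w ≠ u)
    (hcr : Crosses u v w x) :
    dist u w + dist v x < dist u v + dist w x := by
  obtain ⟨z, hz1, hz2⟩ := hcr
  have hseg1 : dist u z + dist z v = dist u v :=
    dist_add_dist_of_mem_segment (openSegment_subset_segment ℝ u v hz1)
  have hseg2 : dist w z + dist z x = dist w x :=
    dist_add_dist_of_mem_segment (openSegment_subset_segment ℝ w x hz2)
  have t2 : dist v x ≤ dist v z + dist z x := dist_triangle v z x
  obtain ⟨a, b, ha, hb, hab, hz⟩ := hz1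
  have hnw : ¬ Wbtw ℝ u z w := by
    intro hbtw
    obtain ⟨t, ⟨ht0, ht1⟩, hzt⟩ := hbtw
    have hz_delta : z - u = b • (v - u) := seg_delta hab hz
    have hz_delta2 : z - u = t • (w - u) := by
      have : z = u + t • (w - u) := by
        rw [← hzt]
        simp [AffineMap.lineMap_apply]
        abel
      rw [this]; abel
    have ht_ne : t ≠ 0 := by
      intro h0
      rw [h0, zero_smul] at hz_delta2
      rw [hz_delta2] at hz_delta
      have : b • (v - u) = 0 := hz_delta.symm
      rcases smul_eq_zero.1 this with h | h
      · linarith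
      · exact huv (by rw [sub_eq_zero] at h; exact h.symm)
    have htpos : 0 < t := lt_of_le_of_ne ht0 (Ne.symm ht_ne)
    have : w = v := by
      refine cross_core huv hcu hcv hcw hb htpos ?_
      rw [← hz_delta, hz_delta2]
    exact hwv this
  have t1 : dist u w < dist u z + dist z w := by
    refine lt_of_le_of_ne (dist_triangle u z w) ?_
    intro hEq
    exact hnw (dist_add_dist_eq_iff.1 hEq.symm)
  have := dist_comm z w
  linarith [dist_comm z v, dist_comm z w]

lemma cross_ne {ctr : Pt} {r : ℝ} {u v w x : Pt}
    (hcu : dist u ctr = r) (hcv : dist v ctr = r) (hcw : dist w ctr = r)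
    (hcx : dist x ctr = r) (huv : u ≠ v)
    (hsne : s(u,v) ≠ s(w,x)) (hcr : Crosses u v w x) :
    u ≠ w ∧ u ≠ x ∧ v ≠ w ∧ v ≠ x := by
  obtain ⟨z, hz1, hz2⟩ := hcr
  obtain ⟨a, b, ha, hb, hab, hz⟩ := hz1
  obtain ⟨c, d, hc, hd, hcd, hz'⟩ := hz2
  have d1 : z - u = b • (v - u) := seg_delta hab hz
  have d1' : z - v = a • (u - v) :=
    seg_delta (a := b) (b := a) (show b + a = 1 by linarith) (by rw [add_comm] at hz; exact hz)
  have d2 : z - w = d • (x - w) := seg_delta hcd hz'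
  have d2' : z - x = c • (w - x) :=
    seg_delta (a := d) (b := c) (show d + c = 1 by linarith) (by rw [add_comm] at hz'; exact hz')
  refine ⟨?_, ?_, ?_, ?_⟩
  · intro h
    rw [← h] at d2
    have hxv : x = v := cross_core huv hcu hcv hcx hb hd (by rw [← d1, d2])
    exact hsne (by rw [h, hxv])
  · intro h
    rw [← h] at d2'
    have hwv : w = v := cross_core huv hcu hcv hcw hb hc (by rw [← d1, d2'])
    apply hsne
    rw [h, hwv]
    exact Sym2.eq_swap
  · intro h
    rw [← h] at d2
    have hxu : x = u := cross_core huv.symm hcv hcu hcx ha hd (by rw [← d1', d2])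
    apply hsne
    rw [← h, hxu]
    exact Sym2.eq_swap
  · intro h
    rw [← h] at d2'
    have hwu : w = u := cross_core huv.symm hcv hcu hcw ha hc (by rw [← d1', d2'])
    rw [← h, hwu] at hsne
    exact hsne rfl

end RBPAux

open RBPAux

/-- if all points lie on a common circle, then in a minimum RBP
spanning graph no purple edge crosses any other edge. -/
theorem circle_minRBP_purple_edge_crosses_nothing (R B P : Finset Pt)
    (hRB : Disjoint R B) (hRP : Disjoint R P) (hBP : Disjoint B P)
    (ctr : Pt) (r : ℝ) (hr : 0 < r)
    (hcirc : ∀ q ∈ R ∪ B ∪ P, dist q ctr = r)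
    (E : Finset (Sym2 Pt)) (hE : IsMinRBP R B P E) :
    ∀ u v w x : Pt, u ∈ P → v ∈ P → s(u, v) ∈ E → s(w, x) ∈ E →
      s(u, v) ≠ s(w, x) → ¬ Crosses u v w x := by
  intro u v w x huP hvP huvE hwxE hsne hcr
  obtain ⟨⟨hnd, hmem, hconn1, hconn2⟩, hmin⟩ := hE
  have huS : u ∈ R ∪ B ∪ P := Finset.mem_union_right _ huP
  have hvS : v ∈ R ∪ B ∪ P := Finset.mem_union_right _ hvP
  have hwS : w ∈ R ∪ B ∪ P := hmem _ hwxE w (Sym2.mem_mk_left _ _)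
  have hxS : x ∈ R ∪ B ∪ P := hmem _ hwxE x (Sym2.mem_mk_right _ _)
  have hcu := hcirc u huS
  have hcv := hcirc v hvS
  have hcw := hcirc w hwS
  have hcx := hcirc x hxS
  have huv : u ≠ v := fun h => hnd _ huvE (Sym2.mk_isDiag_iff.2 h)
  have hwx : w ≠ x := fun h => hnd _ hwxE (Sym2.mk_isDiag_iff.2 h)
  obtain ⟨huw, hux, hvw, hvx⟩ := cross_ne hcu hcv hcw hcx huv hsne hcr
  obtain ⟨z, hz1, hz2⟩ := hcr
  have hcr0 : Crosses u v w x := ⟨z, hz1, hz2⟩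
  have hcr_wxuv : Crosses w x u v := ⟨z, hz2, hz1⟩
  have hcr_xwuv : Crosses x w u v := ⟨z, by rwa [openSegment_symm], hz1⟩
  have hcr_vuwx : Crosses v u w x := ⟨z, by rwa [openSegment_symm], hz2⟩
  have hcr_uvxw : Crosses u v x w := ⟨z, hz1, by rwa [openSegment_symm]⟩
  set V1 : Set Pt := ↑(R ∪ P) with hV1def
  set V2 : Set Pt := ↑(B ∪ P) with hV2def
  have hconn1' : (iG V1 E).Connected := hconn1
  have hconn2' : (iG V2 E).Connected := hconn2
  have hu1 : u ∈ V1 := Finset.mem_coe.2 (Finset.mem_union_right _ huP)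
  have hv1 : v ∈ V1 := Finset.mem_coe.2 (Finset.mem_union_right _ hvP)
  have hu2 : u ∈ V2 := Finset.mem_coe.2 (Finset.mem_union_right _ huP)
  have hv2 : v ∈ V2 := Finset.mem_coe.2 (Finset.mem_union_right _ hvP)
  have hwx_mem_erase_uv : s(w,x) ∈ E.erase s(u,v) := Finset.mem_erase.2 ⟨Ne.symm hsne, hwxE⟩
  have contra : ∀ E' : Finset (Sym2 Pt),
      (∀ e ∈ E', e ∈ E ∨ ∃ p q : Pt, e = s(p,q) ∧ p ≠ q ∧ p ∈ R ∪ B ∪ P ∧ q ∈ R ∪ B ∪ P) →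
      (iG V1 E').Connected → (iG V2 E').Connected →
      weight E' < weight E → False := by
    intro E' hsafe c1 c2 hlt
    have hrbp : IsRBP R B P E' := by
      refine ⟨?_, ?_, c1, c2⟩
      · intro e he
        rcases hsafe e he with h | ⟨p, q, rfl, hpq, _, _⟩
        · exact hnd e h
        · exact fun hd => hpq (Sym2.mk_isDiag_iff.1 hd)
      · intro e he y hy
        rcases hsafe e he with h | ⟨p, q, rfl, _, hp, hq⟩
        · exact hmem e h y hy
        · rcases Sym2.mem_iff.1 hy with rfl | rfl
          · exact hp
          · exact hq
    linarith [hmin E' hrbp]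
  have fix_contra : ∀ p q c' d' : Pt, p ≠ q → p ∈ R ∪ B ∪ P → q ∈ R ∪ B ∪ P →
      s(c',d') ∈ E → dist p q < dist c' d' →
      (iG V1 (insert s(p,q) (E.erase s(c',d')))).Connected →
      (iG V2 (insert s(p,q) (E.erase s(c',d')))).Connected → False := by
    intro p q c' d' hpq hpS hqS hcdE hlt c1 c2
    refine contra _ ?_ c1 c2 ?_
    · intro e he
      rcases Finset.mem_insert.1 he with rfl | hee
      · exact Or.inr ⟨p, q, rfl, hpq, hpS, hqS⟩
      · exact Or.inl (Finset.mem_of_mem_erase hee)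
    · have h1 := weight_insert_le (E.erase s(c',d')) s(p,q)
      rw [weight_erase hcdE, edgeLen_mk, edgeLen_mk] at h1
      linarith
  have hsub_ins : ∀ (f : Sym2 Pt), ∀ e ∈ E, e ∈ insert f (E.erase s(w,x)) ∨ e = s(w,x) := by
    intro f e he
    by_cases h : e = s(w,x)
    · exact Or.inr h
    · exact Or.inl (Finset.mem_insert_of_mem (Finset.mem_erase.2 ⟨h, he⟩))
  by_cases hI : w ∈ R ∪ P ∧ x ∈ R ∪ P
  · by_cases hII : w ∈ B ∪ P ∧ x ∈ B ∪ P
    · -- Branch D : w, x are purple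
      have hwP : w ∈ P := by
        rcases Finset.mem_union.1 hI.1 with h | h
        · rcases Finset.mem_union.1 hII.1 with h' | h'
          · exact absurd h' (Finset.disjoint_left.1 hRB h)
          · exact absurd h' (Finset.disjoint_left.1 hRP h)
        · exact h
      have hxP : x ∈ P := by
        rcases Finset.mem_union.1 hI.2 with h | h
        · rcases Finset.mem_union.1 hII.2 with h' | h'
          · exact absurd h' (Finset.disjoint_left.1 hRB h)
          · exact absurd h' (Finset.disjoint_left.1 hRP h)
        · exact h
      have hw1 : w ∈ V1 := Finset.mem_coe.2 hI.1
      have hx1 : x ∈ V1 := Finset.mem_coe.2 hI.2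
      have hw2 : w ∈ V2 := Finset.mem_coe.2 hII.1
      have hx2 : x ∈ V2 := Finset.mem_coe.2 hII.2
      -- single-edge-removal moves with a repair edge
      have move_xfix : (iG V1 (E.erase s(w,x))).Reachable ⟨u,hu1⟩ ⟨w,hw1⟩ →
          (iG V2 (E.erase s(w,x))).Reachable ⟨u,hu2⟩ ⟨w,hw2⟩ → False := by
        intro hA1 hA2
        rcases chord_short hcw hcx hcu hcv hwx hcr_wxuv with hlen | hlen
        · exact fix_contra u x w x hux huS hxS hwxE hlen
            (conn_fixmove hu1 hv1 hw1 hx1 hconn1' huvE hsne huv hux (Or.inl rfl) hA1)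
            (conn_fixmove hu2 hv2 hw2 hx2 hconn2' huvE hsne huv hux (Or.inl rfl) hA2)
        · exact fix_contra v x w x hvx hvS hxS hwxE hlen
            (conn_fixmove hu1 hv1 hw1 hx1 hconn1' huvE hsne huv hvx (Or.inr rfl) hA1)
            (conn_fixmove hu2 hv2 hw2 hx2 hconn2' huvE hsne huv hvx (Or.inr rfl) hA2)
      have move_wfix : (iG V1 (E.erase s(w,x))).Reachable ⟨u,hu1⟩ ⟨x,hx1⟩ →
          (iG V2 (E.erase s(w,x))).Reachable ⟨u,hu2⟩ ⟨x,hx2⟩ → False := by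
        intro hB1 hB2
        have hswap : s(x,w) = s(w,x) := Sym2.eq_swap
        have hsne' : s(u,v) ≠ s(x,w) := by rw [hswap]; exact hsne
        have hB1' : (iG V1 (E.erase s(x,w))).Reachable ⟨u,hu1⟩ ⟨x,hx1⟩ := by
          rw [hswap]; exact hB1
        have hB2' : (iG V2 (E.erase s(x,w))).Reachable ⟨u,hu2⟩ ⟨x,hx2⟩ := by
          rw [hswap]; exact hB2
        rcases chord_short hcx hcw hcu hcv hwx.symm hcr_xwuv with hlen | hlen
        · rw [dist_comm x w] at hlen
          have c1 := conn_fixmove hu1 hv1 hx1 hw1 hconn1' huvE hsne' huv huw (Or.inl rfl) hB1'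
          have c2 := conn_fixmove hu2 hv2 hx2 hw2 hconn2' huvE hsne' huv huw (Or.inl rfl) hB2'
          rw [hswap] at c1 c2
          exact fix_contra u w w x huw huS hwS hwxE hlen c1 c2
        · rw [dist_comm x w] at hlen
          have c1 := conn_fixmove hu1 hv1 hx1 hw1 hconn1' huvE hsne' huv hvw (Or.inr rfl) hB1'
          have c2 := conn_fixmove hu2 hv2 hx2 hw2 hconn2' huvE hsne' huv hvw (Or.inr rfl) hB2'
          rw [hswap] at c1 c2
          exact fix_contra v w w x hvw hvS hwS hwxE hlen c1 c2
      have move_vfix : (iG V1 (E.erase s(u,v))).Reachable ⟨w,hw1⟩ ⟨u,hu1⟩ →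
          (iG V2 (E.erase s(u,v))).Reachable ⟨w,hw2⟩ ⟨u,hu2⟩ → False := by
        intro hA1' hA2'
        rcases chord_short hcu hcv hcw hcx huv hcr0 with hlen | hlen
        · exact fix_contra w v u v hvw.symm hwS hvS huvE hlen
            (conn_fixmove hw1 hx1 hu1 hv1 hconn1' hwxE (Ne.symm hsne) hwx hvw.symm (Or.inl rfl) hA1')
            (conn_fixmove hw2 hx2 hu2 hv2 hconn2' hwxE (Ne.symm hsne) hwx hvw.symm (Or.inl rfl) hA2')
        · exact fix_contra x v u v hvx.symm hxS hvS huvE hlen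
            (conn_fixmove hw1 hx1 hu1 hv1 hconn1' hwxE (Ne.symm hsne) hwx hvx.symm (Or.inr rfl) hA1')
            (conn_fixmove hw2 hx2 hu2 hv2 hconn2' hwxE (Ne.symm hsne) hwx hvx.symm (Or.inr rfl) hA2')
      have move_ufix : (iG V1 (E.erase s(u,v))).Reachable ⟨w,hw1⟩ ⟨v,hv1⟩ →
          (iG V2 (E.erase s(u,v))).Reachable ⟨w,hw2⟩ ⟨v,hv2⟩ → False := by
        intro hB1' hB2'
        have hswapuv : s(v,u) = s(u,v) := Sym2.eq_swap
        have hsne'' : s(w,x) ≠ s(v,u) := by rw [hswapuv]; exact Ne.symm hsne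
        have hB1'' : (iG V1 (E.erase s(v,u))).Reachable ⟨w,hw1⟩ ⟨v,hv1⟩ := by
          rw [hswapuv]; exact hB1'
        have hB2'' : (iG V2 (E.erase s(v,u))).Reachable ⟨w,hw2⟩ ⟨v,hv2⟩ := by
          rw [hswapuv]; exact hB2'
        rcases chord_short hcv hcu hcw hcx huv.symm hcr_vuwx with hlen | hlen
        · rw [dist_comm v u] at hlen
          have c1 := conn_fixmove hw1 hx1 hv1 hu1 hconn1' hwxE hsne'' hwx huw.symm (Or.inl rfl) hB1''
          have c2 := conn_fixmove hw2 hx2 hv2 hu2 hconn2' hwxE hsne'' hwx huw.symm (Or.inl rfl) hB2''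
          rw [hswapuv] at c1 c2
          exact fix_contra w u u v huw.symm hwS huS huvE hlen c1 c2
        · rw [dist_comm v u] at hlen
          have c1 := conn_fixmove hw1 hx1 hv1 hu1 hconn1' hwxE hsne'' hwx hux.symm (Or.inr rfl) hB1''
          have c2 := conn_fixmove hw2 hx2 hv2 hu2 hconn2' hwxE hsne'' hwx hux.symm (Or.inr rfl) hB2''
          rw [hswapuv] at c1 c2
          exact fix_contra x u u v hux.symm hxS huS huvE hlen c1 c2
      -- machinery for the pairing moves
      have hH_wx : ∀ e ∈ E.erase s(w,x), e ∈ (E.erase s(u,v)).erase s(w,x) ∨ e = s(u,v) := by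
        intro e he
        by_cases h : e = s(u,v)
        · exact Or.inr h
        · obtain ⟨h1, h2⟩ := Finset.mem_erase.1 he
          exact Or.inl (Finset.mem_erase.2 ⟨h1, Finset.mem_erase.2 ⟨h, h2⟩⟩)
      have hmono1 : iG V1 ((E.erase s(u,v)).erase s(w,x)) ≤ iG V1 (E.erase s(u,v)) :=
        iG_mono (fun e he => (Finset.mem_erase.1 he).2)
      have hmono2 : iG V2 ((E.erase s(u,v)).erase s(w,x)) ≤ iG V2 (E.erase s(u,v)) :=
        iG_mono (fun e he => (Finset.mem_erase.1 he).2)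
      have hwxadj1 : (iG V1 (E.erase s(u,v))).Adj ⟨w,hw1⟩ ⟨x,hx1⟩ := ⟨hwx, hwx_mem_erase_uv⟩
      have hwxadj2 : (iG V2 (E.erase s(u,v))).Adj ⟨w,hw2⟩ ⟨x,hx2⟩ := ⟨hwx, hwx_mem_erase_uv⟩
      have kill_ux1 : ¬ (iG V1 (E.erase s(u,v))).Reachable ⟨w,hw1⟩ ⟨u,hu1⟩ →
          ¬ (iG V1 ((E.erase s(u,v)).erase s(w,x))).Reachable ⟨u,hu1⟩ ⟨x,hx1⟩ :=
        fun hn h => hn (hwxadj1.reachable.trans (h.mono hmono1).symm)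
      have kill_vx1 : ¬ (iG V1 (E.erase s(u,v))).Reachable ⟨w,hw1⟩ ⟨v,hv1⟩ →
          ¬ (iG V1 ((E.erase s(u,v)).erase s(w,x))).Reachable ⟨v,hv1⟩ ⟨x,hx1⟩ :=
        fun hn h => hn (hwxadj1.reachable.trans (h.mono hmono1).symm)
      have kill_uw1 : ¬ (iG V1 (E.erase s(u,v))).Reachable ⟨w,hw1⟩ ⟨u,hu1⟩ →
          ¬ (iG V1 ((E.erase s(u,v)).erase s(w,x))).Reachable ⟨u,hu1⟩ ⟨w,hw1⟩ :=
        fun hn h => hn ((h.mono hmono1).symm)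
      have kill_vw1 : ¬ (iG V1 (E.erase s(u,v))).Reachable ⟨w,hw1⟩ ⟨v,hv1⟩ →
          ¬ (iG V1 ((E.erase s(u,v)).erase s(w,x))).Reachable ⟨v,hv1⟩ ⟨w,hw1⟩ :=
        fun hn h => hn ((h.mono hmono1).symm)
      have kill_ux2 : ¬ (iG V2 (E.erase s(u,v))).Reachable ⟨w,hw2⟩ ⟨u,hu2⟩ →
          ¬ (iG V2 ((E.erase s(u,v)).erase s(w,x))).Reachable ⟨u,hu2⟩ ⟨x,hx2⟩ :=
        fun hn h => hn (hwxadj2.reachable.trans (h.mono hmono2).symm)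
      have kill_vx2 : ¬ (iG V2 (E.erase s(u,v))).Reachable ⟨w,hw2⟩ ⟨v,hv2⟩ →
          ¬ (iG V2 ((E.erase s(u,v)).erase s(w,x))).Reachable ⟨v,hv2⟩ ⟨x,hx2⟩ :=
        fun hn h => hn (hwxadj2.reachable.trans (h.mono hmono2).symm)
      have kill_uw2 : ¬ (iG V2 (E.erase s(u,v))).Reachable ⟨w,hw2⟩ ⟨u,hu2⟩ →
          ¬ (iG V2 ((E.erase s(u,v)).erase s(w,x))).Reachable ⟨u,hu2⟩ ⟨w,hw2⟩ :=
        fun hn h => hn ((h.mono hmono2).symm)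
      have kill_vw2 : ¬ (iG V2 (E.erase s(u,v))).Reachable ⟨w,hw2⟩ ⟨v,hv2⟩ →
          ¬ (iG V2 ((E.erase s(u,v)).erase s(w,x))).Reachable ⟨v,hv2⟩ ⟨w,hw2⟩ :=
        fun hn h => hn ((h.mono hmono2).symm)
      have split_ux1 : (iG V1 (E.erase s(w,x))).Reachable ⟨u,hu1⟩ ⟨x,hx1⟩ →
          (iG V1 ((E.erase s(u,v)).erase s(w,x))).Reachable ⟨u,hu1⟩ ⟨x,hx1⟩ ∨
          (iG V1 ((E.erase s(u,v)).erase s(w,x))).Reachable ⟨v,hv1⟩ ⟨x,hx1⟩ := by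
        intro h
        rcases reach_split hu1 hv1 hH_wx hu1 hx1 h with h1 | ⟨h1, h2⟩ | ⟨h1, h2⟩
        · exact Or.inl h1
        · exact Or.inr h2
        · exact Or.inl h2
      have split_uw1 : (iG V1 (E.erase s(w,x))).Reachable ⟨u,hu1⟩ ⟨w,hw1⟩ →
          (iG V1 ((E.erase s(u,v)).erase s(w,x))).Reachable ⟨u,hu1⟩ ⟨w,hw1⟩ ∨
          (iG V1 ((E.erase s(u,v)).erase s(w,x))).Reachable ⟨v,hv1⟩ ⟨w,hw1⟩ := by
        intro h
        rcases reach_split hu1 hv1 hH_wx hu1 hw1 h with h1 | ⟨h1, h2⟩ | ⟨h1, h2⟩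
        · exact Or.inl h1
        · exact Or.inr h2
        · exact Or.inl h2
      have split_ux2 : (iG V2 (E.erase s(w,x))).Reachable ⟨u,hu2⟩ ⟨x,hx2⟩ →
          (iG V2 ((E.erase s(u,v)).erase s(w,x))).Reachable ⟨u,hu2⟩ ⟨x,hx2⟩ ∨
          (iG V2 ((E.erase s(u,v)).erase s(w,x))).Reachable ⟨v,hv2⟩ ⟨x,hx2⟩ := by
        intro h
        rcases reach_split hu2 hv2 hH_wx hu2 hx2 h with h1 | ⟨h1, h2⟩ | ⟨h1, h2⟩
        · exact Or.inl h1
        · exact Or.inr h2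
        · exact Or.inl h2
      have split_uw2 : (iG V2 (E.erase s(w,x))).Reachable ⟨u,hu2⟩ ⟨w,hw2⟩ →
          (iG V2 ((E.erase s(u,v)).erase s(w,x))).Reachable ⟨u,hu2⟩ ⟨w,hw2⟩ ∨
          (iG V2 ((E.erase s(u,v)).erase s(w,x))).Reachable ⟨v,hv2⟩ ⟨w,hw2⟩ := by
        intro h
        rcases reach_split hu2 hv2 hH_wx hu2 hw2 h with h1 | ⟨h1, h2⟩ | ⟨h1, h2⟩
        · exact Or.inl h1
        · exact Or.inr h2
        · exact Or.inl h2
      have pair_wt : ∀ e1 e2 : Sym2 Pt,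
          weight (insert e1 (insert e2 ((E.erase s(u,v)).erase s(w,x)))) ≤
            edgeLen e1 + edgeLen e2 + weight E - edgeLen s(u,v) - edgeLen s(w,x) := by
        intro e1 e2
        have w1 := weight_insert_le (insert e2 ((E.erase s(u,v)).erase s(w,x))) e1
        have w2 := weight_insert_le ((E.erase s(u,v)).erase s(w,x)) e2
        have w3 : weight ((E.erase s(u,v)).erase s(w,x)) =
            weight E - edgeLen s(u,v) - edgeLen s(w,x) := by
          rw [weight_erase hwx_mem_erase_uv, weight_erase huvE]
        linarith
      have pair_contra_P1 :
          (iG V1 (insert s(u,w) (insert s(v,x) ((E.erase s(u,v)).erase s(w,x))))).Connected →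
          (iG V2 (insert s(u,w) (insert s(v,x) ((E.erase s(u,v)).erase s(w,x))))).Connected →
          False := by
        intro c1 c2
        refine contra _ ?_ c1 c2 ?_
        · intro e he
          rcases Finset.mem_insert.1 he with rfl | he1
          · exact Or.inr ⟨u, w, rfl, huw, huS, hwS⟩
          rcases Finset.mem_insert.1 he1 with rfl | he2
          · exact Or.inr ⟨v, x, rfl, hvx, hvS, hxS⟩
          · exact Or.inl (Finset.mem_of_mem_erase (Finset.mem_of_mem_erase he2))
        · have hplt := pairing_lt hcu hcv hcw hcx huv hvw.symm huw.symm hcr0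
          have hwt := pair_wt s(u,w) s(v,x)
          rw [edgeLen_mk, edgeLen_mk, edgeLen_mk, edgeLen_mk] at hwt
          linarith
      have pair_contra_P2 :
          (iG V1 (insert s(u,x) (insert s(v,w) ((E.erase s(u,v)).erase s(w,x))))).Connected →
          (iG V2 (insert s(u,x) (insert s(v,w) ((E.erase s(u,v)).erase s(w,x))))).Connected →
          False := by
        intro c1 c2
        refine contra _ ?_ c1 c2 ?_
        · intro e he
          rcases Finset.mem_insert.1 he with rfl | he1
          · exact Or.inr ⟨u, x, rfl, hux, huS, hxS⟩
          rcases Finset.mem_insert.1 he1 with rfl | he2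
          · exact Or.inr ⟨v, w, rfl, hvw, hvS, hwS⟩
          · exact Or.inl (Finset.mem_of_mem_erase (Finset.mem_of_mem_erase he2))
        · have hplt := pairing_lt hcu hcv hcx hcw huv hvx.symm hux.symm hcr_uvxw
          rw [dist_comm x w] at hplt
          have hwt := pair_wt s(u,x) s(v,w)
          rw [edgeLen_mk, edgeLen_mk, edgeLen_mk, edgeLen_mk] at hwt
          linarith
      -- the case analysis
      by_cases hA1 : (iG V1 (E.erase s(w,x))).Reachable ⟨u,hu1⟩ ⟨w,hw1⟩
      · by_cases hA2 : (iG V2 (E.erase s(w,x))).Reachable ⟨u,hu2⟩ ⟨w,hw2⟩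
        · exact move_xfix hA1 hA2
        · have hB2 := (side_or hu2 hw2 hx2 hconn2').resolve_left hA2
          by_cases hB1 : (iG V1 (E.erase s(w,x))).Reachable ⟨u,hu1⟩ ⟨x,hx1⟩
          · exact move_wfix hB1 hB2
          · -- wx orientation 2: hA1, ¬hB1, ¬hA2, hB2
            by_cases hA1' : (iG V1 (E.erase s(u,v))).Reachable ⟨w,hw1⟩ ⟨u,hu1⟩
            · by_cases hA2' : (iG V2 (E.erase s(u,v))).Reachable ⟨w,hw2⟩ ⟨u,hu2⟩
              · exact move_vfix hA1' hA2'
              · have hB2' := (side_or hw2 hu2 hv2 hconn2').resolve_left hA2'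
                by_cases hB1' : (iG V1 (E.erase s(u,v))).Reachable ⟨w,hw1⟩ ⟨v,hv1⟩
                · exact move_ufix hB1' hB2'
                · -- combo wx2 & uv2 → P2
                  have f1 := (split_uw1 hA1).resolve_right (kill_vw1 hB1')
                  have f2 := (split_ux2 hB2).resolve_left (kill_ux2 hA2')
                  exact pair_contra_P2
                    (pairP2_conn hu1 hv1 hw1 hx1 hconn1' hux hvw (Or.inr f1))
                    (pairP2_conn hu2 hv2 hw2 hx2 hconn2' hux hvw (Or.inl f2))
            · have hB1' := (side_or hw1 hu1 hv1 hconn1').resolve_left hA1'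
              by_cases hB2' : (iG V2 (E.erase s(u,v))).Reachable ⟨w,hw2⟩ ⟨v,hv2⟩
              · exact move_ufix hB1' hB2'
              · have hA2' := (side_or hw2 hu2 hv2 hconn2').resolve_right hB2'
                -- combo wx2 & uv1 → P1
                have f1 := (split_uw1 hA1).resolve_left (kill_uw1 hA1')
                have f2 := (split_ux2 hB2).resolve_right (kill_vx2 hB2')
                exact pair_contra_P1
                  (pairP1_conn hu1 hv1 hw1 hx1 hconn1' huw hvx (Or.inr f1))
                  (pairP1_conn hu2 hv2 hw2 hx2 hconn2' huw hvx (Or.inl f2))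
      · have hB1 := (side_or hu1 hw1 hx1 hconn1').resolve_left hA1
        by_cases hB2 : (iG V2 (E.erase s(w,x))).Reachable ⟨u,hu2⟩ ⟨x,hx2⟩
        · exact move_wfix hB1 hB2
        · have hA2 := (side_or hu2 hw2 hx2 hconn2').resolve_right hB2
          -- wx orientation 1: ¬hA1, hB1, hA2, ¬hB2
          by_cases hA1' : (iG V1 (E.erase s(u,v))).Reachable ⟨w,hw1⟩ ⟨u,hu1⟩
          · by_cases hA2' : (iG V2 (E.erase s(u,v))).Reachable ⟨w,hw2⟩ ⟨u,hu2⟩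
            · exact move_vfix hA1' hA2'
            · have hB2' := (side_or hw2 hu2 hv2 hconn2').resolve_left hA2'
              by_cases hB1' : (iG V1 (E.erase s(u,v))).Reachable ⟨w,hw1⟩ ⟨v,hv1⟩
              · exact move_ufix hB1' hB2'
              · -- combo wx1 & uv2 → P1
                have f1 := (split_ux1 hB1).resolve_right (kill_vx1 hB1')
                have f2 := (split_uw2 hA2).resolve_left (kill_uw2 hA2')
                exact pair_contra_P1
                  (pairP1_conn hu1 hv1 hw1 hx1 hconn1' huw hvx (Or.inl f1))
                  (pairP1_conn hu2 hv2 hw2 hx2 hconn2' huw hvx (Or.inr f2))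
          · have hB1' := (side_or hw1 hu1 hv1 hconn1').resolve_left hA1'
            by_cases hB2' : (iG V2 (E.erase s(u,v))).Reachable ⟨w,hw2⟩ ⟨v,hv2⟩
            · exact move_ufix hB1' hB2'
            · have hA2' := (side_or hw2 hu2 hv2 hconn2').resolve_right hB2'
              -- combo wx1 & uv1 → P2
              have f1 := (split_ux1 hB1).resolve_left (kill_ux1 hA1')
              have f2 := (split_uw2 hA2).resolve_right (kill_vw2 hB2')
              exact pair_contra_P2
                (pairP2_conn hu1 hv1 hw1 hx1 hconn1' hux hvw (Or.inl f1))
                (pairP2_conn hu2 hv2 hw2 hx2 hconn2' hux hvw (Or.inr f2))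
    · -- Branch B : wx lives only in the red-purple graph
      have hw1 : w ∈ V1 := Finset.mem_coe.2 hI.1
      have hx1 : x ∈ V1 := Finset.mem_coe.2 hI.2
      have hvis2 : w ∉ V2 ∨ x ∉ V2 := by
        rcases not_and_or.1 hII with h | h
        · exact Or.inl (fun hh => h (Finset.mem_coe.1 hh))
        · exact Or.inr (fun hh => h (Finset.mem_coe.1 hh))
      rcases side_or hu1 hw1 hx1 hconn1' with hA | hB
      · rcases chord_short hcw hcx hcu hcv hwx hcr_wxuv with hlen | hlen
        · exact fix_contra u x w x hux huS hxS hwxE hlen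
            (conn_fixmove hu1 hv1 hw1 hx1 hconn1' huvE hsne huv hux (Or.inl rfl) hA)
            (conn_invisible hconn2' (hsub_ins _) hvis2)
        · exact fix_contra v x w x hvx hvS hxS hwxE hlen
            (conn_fixmove hu1 hv1 hw1 hx1 hconn1' huvE hsne huv hvx (Or.inr rfl) hA)
            (conn_invisible hconn2' (hsub_ins _) hvis2)
      · have hswap : s(x,w) = s(w,x) := Sym2.eq_swap
        have hsne' : s(u,v) ≠ s(x,w) := by rw [hswap]; exact hsne
        have hB' : (iG V1 (E.erase s(x,w))).Reachable ⟨u,hu1⟩ ⟨x,hx1⟩ := by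
          rw [hswap]; exact hB
        rcases chord_short hcx hcw hcu hcv hwx.symm hcr_xwuv with hlen | hlen
        · rw [dist_comm x w] at hlen
          have c1 := conn_fixmove hu1 hv1 hx1 hw1 hconn1' huvE hsne' huv huw (Or.inl rfl) hB'
          rw [hswap] at c1
          exact fix_contra u w w x huw huS hwS hwxE hlen c1
            (conn_invisible hconn2' (hsub_ins _) hvis2)
        · rw [dist_comm x w] at hlen
          have c1 := conn_fixmove hu1 hv1 hx1 hw1 hconn1' huvE hsne' huv hvw (Or.inr rfl) hB'
          rw [hswap] at c1
          exact fix_contra v w w x hvw hvS hwS hwxE hlen c1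
            (conn_invisible hconn2' (hsub_ins _) hvis2)
  · by_cases hII : w ∈ B ∪ P ∧ x ∈ B ∪ P
    · -- Branch C : wx lives only in the blue-purple graph
      have hw2 : w ∈ V2 := Finset.mem_coe.2 hII.1
      have hx2 : x ∈ V2 := Finset.mem_coe.2 hII.2
      have hvis1 : w ∉ V1 ∨ x ∉ V1 := by
        rcases not_and_or.1 hI with h | h
        · exact Or.inl (fun hh => h (Finset.mem_coe.1 hh))
        · exact Or.inr (fun hh => h (Finset.mem_coe.1 hh))
      rcases side_or hu2 hw2 hx2 hconn2' with hA | hB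
      · rcases chord_short hcw hcx hcu hcv hwx hcr_wxuv with hlen | hlen
        · exact fix_contra u x w x hux huS hxS hwxE hlen
            (conn_invisible hconn1' (hsub_ins _) hvis1)
            (conn_fixmove hu2 hv2 hw2 hx2 hconn2' huvE hsne huv hux (Or.inl rfl) hA)
        · exact fix_contra v x w x hvx hvS hxS hwxE hlen
            (conn_invisible hconn1' (hsub_ins _) hvis1)
            (conn_fixmove hu2 hv2 hw2 hx2 hconn2' huvE hsne huv hvx (Or.inr rfl) hA)
      · have hswap : s(x,w) = s(w,x) := Sym2.eq_swap
        have hsne' : s(u,v) ≠ s(x,w) := by rw [hswap]; exact hsne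
        have hB' : (iG V2 (E.erase s(x,w))).Reachable ⟨u,hu2⟩ ⟨x,hx2⟩ := by
          rw [hswap]; exact hB
        rcases chord_short hcx hcw hcu hcv hwx.symm hcr_xwuv with hlen | hlen
        · rw [dist_comm x w] at hlen
          have c2 := conn_fixmove hu2 hv2 hx2 hw2 hconn2' huvE hsne' huv huw (Or.inl rfl) hB'
          rw [hswap] at c2
          exact fix_contra u w w x huw huS hwS hwxE hlen
            (conn_invisible hconn1' (hsub_ins _) hvis1) c2
        · rw [dist_comm x w] at hlen
          have c2 := conn_fixmove hu2 hv2 hx2 hw2 hconn2' huvE hsne' huv hvw (Or.inr rfl) hB'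
          rw [hswap] at c2
          exact fix_contra v w w x hvw hvS hwS hwxE hlen
            (conn_invisible hconn1' (hsub_ins _) hvis1) c2
    · -- Branch A : wx is in neither induced graph
      have hvis1 : w ∉ V1 ∨ x ∉ V1 := by
        rcases not_and_or.1 hI with h | h
        · exact Or.inl (fun hh => h (Finset.mem_coe.1 hh))
        · exact Or.inr (fun hh => h (Finset.mem_coe.1 hh))
      have hvis2 : w ∉ V2 ∨ x ∉ V2 := by
        rcases not_and_or.1 hII with h | h
        · exact Or.inl (fun hh => h (Finset.mem_coe.1 hh))
        · exact Or.inr (fun hh => h (Finset.mem_coe.1 hh))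
      have hsub : ∀ e ∈ E, e ∈ E.erase s(w,x) ∨ e = s(w,x) := by
        intro e he
        by_cases h : e = s(w,x)
        · exact Or.inr h
        · exact Or.inl (Finset.mem_erase.2 ⟨h, he⟩)
      refine contra (E.erase s(w,x)) (fun e he => Or.inl (Finset.mem_of_mem_erase he))
        (conn_invisible hconn1' hsub hvis1) (conn_invisible hconn2' hsub hvis2) ?_
      rw [weight_erase hwxE, edgeLen_mk]
      have : 0 < dist w x := dist_pos.2 hwx
      linarith
end
end

section
/- Suppose all points of S = R ∪ B ∪ P lie on a common circle. Then in a minimum red-blue-purple spanning graph of (R,B,P), no red or blue edge crosses the line segment joining any pair of purple points: for every red or blue edge uv of the graph and every two distinct purple points p, p' ∈ P, the segments uv and pp' do not intersect in a point lying in the relative interior of both segments. -/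
open scoped Classical

noncomputable section

lemma K1 (α β ip r2 : ℝ) (hr : 0 < r2) (h1 : ip < r2) (h2 : -r2 < ip)
    (hconic : α^2*r2 + β^2*r2 + 2*α*β*ip = r2) (hS : 1 < α + β) :
    ip < α*r2 + β*ip := by
  have hE : 2*α*β*(r2 - ip) = r2*((α+β)^2 - 1) := by linear_combination -hconic
  have hprod : 0 < α*β := by nlinarith [mul_pos hr (show (0:ℝ) < (α+β)^2 - 1 by nlinarith)]
  have hα : 0 < α := by
    by_contra h
    push_neg at h
    have hβ : 0 < β := by nlinarith
    nlinarith [mul_nonpos_of_nonpos_of_nonneg h hβ.le]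
  have hβ : 0 < β := by
    by_contra h
    push_neg at h
    nlinarith [mul_nonpos_of_nonneg_of_nonpos hα.le h]
  have hdiff : (α - β)^2 < 1 := by nlinarith
  by_cases hb1 : β ≤ 1
  · nlinarith [mul_pos hr (show (0:ℝ) < α + β - 1 by linarith),
      mul_nonneg (show (0:ℝ) ≤ 1 - β by linarith) (show (0:ℝ) ≤ r2 - ip by linarith)]
  · push_neg at hb1
    have h5 : 0 < α*β + α + 1 - β^2 := by nlinarith
    have final : (α*r2 + β*ip - ip) * (2*(α*β)) = r2*(α+β-1)*(α*β+α+1-β^2) := by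
      linear_combination (1 - β) * hE
    nlinarith [mul_pos (mul_pos hr (show (0:ℝ) < α+β-1 by linarith)) h5, final,
      mul_pos hprod hprod]

lemma possq {x y z w : ℝ} (h : ¬(x = y ∧ z = w)) : 0 < (x-y)^2+(z-w)^2 := by
  by_cases hx : x = y
  · have hz : z ≠ w := fun hz => h ⟨hx, hz⟩
    have : 0 < (z-w)^2 := sq_pos_iff.2 (sub_ne_zero.2 hz)
    nlinarith [sq_nonneg (x-y)]
  · have : 0 < (x-y)^2 := sq_pos_iff.2 (sub_ne_zero.2 hx)
    nlinarith [sq_nonneg (z-w)]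


lemma iplt (u0 u1 v0 v1 r2 : ℝ) (hu : u0^2+u1^2 = r2) (hv : v0^2+v1^2 = r2)
    (huv : 0 < (u0-v0)^2+(u1-v1)^2) : u0*v0+u1*v1 < r2 := by nlinarith

lemma Dpos (ip D r2 : ℝ) (lag : ip^2 + D^2 = r2*r2) (h1 : ip < r2) (h2 : -r2 < ip) :
    0 < D^2 := by nlinarith

lemma ipeq (ip D r2 : ℝ) (lag : ip^2 + D^2 = r2*r2) (h : ¬ (-r2 < ip)) (hr : 0 < r2) :
    ip = -r2 := by push_neg at h; nlinarith [sq_nonneg D, sq_nonneg (ip+r2)]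

lemma sqzero (a b : ℝ) (h : a^2+b^2 = 0) : a = 0 := by nlinarith [sq_nonneg a, sq_nonneg b]

lemma sqswap (x y z w : ℝ) (h : 0 < (x-y)^2+(z-w)^2) : 0 < (y-x)^2+(w-z)^2 := by nlinarith

lemma degcase (r2 u0 u1 q0 q1 : ℝ) (hr : 0 < r2) (hu : u0^2+u1^2 = r2) (hq : q0^2+q1^2 = r2)
    (h1 : 0 < (q0-(-u0))^2+(q1-(-u1))^2) (h2 : 0 < (q0-u0)^2+(q1-u1)^2) :
    (q0-u0)^2+(q1-u1)^2 < (u0-(-u0))^2+(u1-(-u1))^2 ∧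
    (q0-(-u0))^2+(q1-(-u1))^2 < (u0-(-u0))^2+(u1-(-u1))^2 := by
  constructor <;> nlinarith

set_option maxHeartbeats 1000000 in
lemma heart (r2 a b c d u0 u1 v0 v1 p0 p1 q0 q1 : ℝ)
    (hr : 0 < r2)
    (hu : u0^2+u1^2 = r2) (hv : v0^2+v1^2 = r2) (hp : p0^2+p1^2 = r2) (hq : q0^2+q1^2 = r2)
    (ha : 0 < a) (hb : 0 < b) (hab : a + b = 1)
    (hc : 0 < c) (hd : 0 < d) (hcd : c + d = 1)
    (h0 : a*u0 + b*v0 = c*p0 + d*q0) (h1 : a*u1 + b*v1 = c*p1 + d*q1)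
    (huv : 0 < (u0-v0)^2+(u1-v1)^2)
    (hpq : 0 < (p0-q0)^2+(p1-q1)^2)
    (hne1 : 0 < (p0-u0)^2+(p1-u1)^2 ∨ 0 < (q0-v0)^2+(q1-v1)^2)
    (hne2 : 0 < (p0-v0)^2+(p1-v1)^2 ∨ 0 < (q0-u0)^2+(q1-u1)^2) :
    ((p0-u0)^2+(p1-u1)^2 < (u0-v0)^2+(u1-v1)^2 ∧ (p0-v0)^2+(p1-v1)^2 < (u0-v0)^2+(u1-v1)^2)
    ∨ ((q0-u0)^2+(q1-u1)^2 < (u0-v0)^2+(u1-v1)^2 ∧ (q0-v0)^2+(q1-v1)^2 < (u0-v0)^2+(u1-v1)^2) := by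
  obtain ⟨ip, hip⟩ : ∃ x : ℝ, x = u0*v0 + u1*v1 := ⟨_, rfl⟩
  have lag : ip^2 + (u0*v1-u1*v0)^2 = r2*r2 := by
    rw [hip]; linear_combination (v0^2+v1^2)*hu + r2*hv
  have hipr : ip < r2 := by rw [hip]; exact iplt u0 u1 v0 v1 r2 hu hv huv
  by_cases hmid : -r2 < ip
  · -- main case: u, v linearly independent
    have hD2 : 0 < (u0*v1-u1*v0)^2 := Dpos ip _ r2 lag hipr hmid
    obtain ⟨D, hDdef⟩ : ∃ x : ℝ, x = u0*v1 - u1*v0 := ⟨_, rfl⟩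
    rw [← hDdef] at hD2
    have hD : D ≠ 0 := fun h => by rw [h] at hD2; simp at hD2
    obtain ⟨α, hαdef⟩ : ∃ x : ℝ, x = (p0*v1 - p1*v0)/D := ⟨_, rfl⟩
    obtain ⟨β, hβdef⟩ : ∃ x : ℝ, x = (u0*p1 - u1*p0)/D := ⟨_, rfl⟩
    obtain ⟨γ, hγdef⟩ : ∃ x : ℝ, x = (q0*v1 - q1*v0)/D := ⟨_, rfl⟩
    obtain ⟨δ, hδdef⟩ : ∃ x : ℝ, x = (u0*q1 - u1*q0)/D := ⟨_, rfl⟩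
    have hp0 : p0 = α*u0 + β*v0 := by
      rw [hαdef, hβdef, div_mul_eq_mul_div, div_mul_eq_mul_div, ← add_div,
        eq_div_iff hD, hDdef]; ring
    have hp1 : p1 = α*u1 + β*v1 := by
      rw [hαdef, hβdef, div_mul_eq_mul_div, div_mul_eq_mul_div, ← add_div,
        eq_div_iff hD, hDdef]; ring
    have hq0 : q0 = γ*u0 + δ*v0 := by
      rw [hγdef, hδdef, div_mul_eq_mul_div, div_mul_eq_mul_div, ← add_div,
        eq_div_iff hD, hDdef]; ring
    have hq1 : q1 = γ*u1 + δ*v1 := by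
      rw [hγdef, hδdef, div_mul_eq_mul_div, div_mul_eq_mul_div, ← add_div,
        eq_div_iff hD, hDdef]; ring
    have conic_p : α^2*r2 + β^2*r2 + 2*α*β*ip = r2 := by
      have h := hp
      rw [hp0, hp1] at h
      linear_combination h - α^2*hu - β^2*hv + 2*α*β*hip
    have conic_q : γ^2*r2 + δ^2*r2 + 2*γ*δ*ip = r2 := by
      have h := hq
      rw [hq0, hq1] at h
      linear_combination h - γ^2*hu - δ^2*hv + 2*γ*δ*hip
    have key0 : (a - (c*α + d*γ))*u0 + (b - (c*β + d*δ))*v0 = 0 := by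
      linear_combination h0 + c*hp0 + d*hq0
    have key1 : (a - (c*α + d*γ))*u1 + (b - (c*β + d*δ))*v1 = 0 := by
      linear_combination h1 + c*hp1 + d*hq1
    have hXD : (a - (c*α + d*γ))*D = 0 := by linear_combination v1*key0 - v0*key1 + (a - (c*α + d*γ))*hDdef
    have hYD : (b - (c*β + d*δ))*D = 0 := by linear_combination u0*key1 - u1*key0 + (b - (c*β + d*δ))*hDdef
    have hX : a = c*α + d*γ := by
      rcases mul_eq_zero.mp hXD with h | h
      · linarith
      · exact absurd h hD
    have hY : b = c*β + d*δ := by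
      rcases mul_eq_zero.mp hYD with h | h
      · linarith
      · exact absurd h hD
    have hsum : c*(α+β) + d*(γ+δ) = 1 := by linear_combination -hX - hY + hab
    have hpu : p0*u0 + p1*u1 = α*r2 + β*ip := by
      rw [hp0, hp1]; linear_combination α*hu - β*hip
    have hpv : p0*v0 + p1*v1 = α*ip + β*r2 := by
      rw [hp0, hp1]; linear_combination β*hv - α*hip
    have hqu : q0*u0 + q1*u1 = γ*r2 + δ*ip := by
      rw [hq0, hq1]; linear_combination γ*hu - δ*hip
    have hqv : q0*v0 + q1*v1 = γ*ip + δ*r2 := by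
      rw [hq0, hq1]; linear_combination δ*hv - γ*hip
    have euv : (u0-v0)^2+(u1-v1)^2 = 2*r2 - 2*ip := by linear_combination hu + hv + 2*hip
    by_cases hS : 1 < α + β
    · left
      have k1 := K1 α β ip r2 hr hipr hmid conic_p hS
      have k2 := K1 β α ip r2 hr hipr hmid (by linear_combination conic_p) (by linarith)
      constructor
      · have e : (p0-u0)^2+(p1-u1)^2 = 2*r2 - 2*(α*r2 + β*ip) := by
          linear_combination hp + hu - 2*hpu
        linarith [k1]
      · have e : (p0-v0)^2+(p1-v1)^2 = 2*r2 - 2*(α*ip + β*r2) := by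
          linear_combination hp + hv - 2*hpv
        linarith [k2]
    · by_cases hS' : 1 < γ + δ
      · right
        have k1 := K1 γ δ ip r2 hr hipr hmid conic_q hS'
        have k2 := K1 δ γ ip r2 hr hipr hmid (by linear_combination conic_q) (by linarith)
        constructor
        · have e : (q0-u0)^2+(q1-u1)^2 = 2*r2 - 2*(γ*r2 + δ*ip) := by
            linear_combination hq + hu - 2*hqu
          linarith [k1]
        · have e : (q0-v0)^2+(q1-v1)^2 = 2*r2 - 2*(γ*ip + δ*r2) := by
            linear_combination hq + hv - 2*hqv
          linarith [k2]
      · -- both sums ≤ 1, so both = 1: degenerate, contradiction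
        exfalso
        push_neg at hS hS'
        have h₁ : c*(α+β) ≤ c*1 := mul_le_mul_of_nonneg_left hS hc.le
        have h₂ : d*(γ+δ) ≤ d*1 := mul_le_mul_of_nonneg_left hS' hd.le
        have e1 : α + β = 1 := mul_left_cancel₀ (ne_of_gt hc) (by linarith : c*(α+β) = c*1)
        have e2 : γ + δ = 1 := mul_left_cancel₀ (ne_of_gt hd) (by linarith : d*(γ+δ) = d*1)
        have hz1 : 2*(α*β)*(ip - r2) = 0 := by
          linear_combination conic_p - r2*(α+β+1)*e1
        have hz2 : 2*(γ*δ)*(ip - r2) = 0 := by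
          linear_combination conic_q - r2*(γ+δ+1)*e2
        have hip_ne : ip - r2 ≠ 0 := by intro h; rw [sub_eq_zero] at h; linarith
        have hαβ : α*β = 0 := by
          rcases mul_eq_zero.mp hz1 with h | h
          · linarith
          · exact absurd h hip_ne
        have hγδ : γ*δ = 0 := by
          rcases mul_eq_zero.mp hz2 with h | h
          · linarith
          · exact absurd h hip_ne
        have hpcase : (p0 = u0 ∧ p1 = u1) ∨ (p0 = v0 ∧ p1 = v1) := by
          rcases mul_eq_zero.mp hαβ with h | h
          · right
            have hb1 : β = 1 := by linarith
            constructor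
            · rw [hp0, h, hb1]; ring
            · rw [hp1, h, hb1]; ring
          · left
            have ha1 : α = 1 := by linarith
            constructor
            · rw [hp0, h, ha1]; ring
            · rw [hp1, h, ha1]; ring
        have hqcase : (q0 = u0 ∧ q1 = u1) ∨ (q0 = v0 ∧ q1 = v1) := by
          rcases mul_eq_zero.mp hγδ with h | h
          · right
            have hb1 : δ = 1 := by linarith
            constructor
            · rw [hq0, h, hb1]; ring
            · rw [hq1, h, hb1]; ring
          · left
            have ha1 : γ = 1 := by linarith
            constructor
            · rw [hq0, h, ha1]; ring
            · rw [hq1, h, ha1]; ring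
        rcases hpcase with ⟨e3, e4⟩ | ⟨e3, e4⟩ <;> rcases hqcase with ⟨e5, e6⟩ | ⟨e5, e6⟩
        · rw [e3, e4, e5, e6] at hpq; simp at hpq
        · rcases hne1 with h | h
          · rw [e3, e4] at h; simp at h
          · rw [e5, e6] at h; simp at h
        · rcases hne2 with h | h
          · rw [e3, e4] at h; simp at h
          · rw [e5, e6] at h; simp at h
        · rw [e3, e4, e5, e6] at hpq; simp at hpq
  · -- degenerate: ip = -r2, i.e. v = -u
    have hipe : ip = -r2 := ipeq ip (u0*v1-u1*v0) r2 lag hmid hr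
    rw [hip] at hipe
    have s0 : (u0+v0)^2 + (u1+v1)^2 = 0 := by linear_combination hu + hv + 2*hipe
    have hv0 : v0 = -u0 := by have := sqzero (u0+v0) (u1+v1) s0; linarith
    have hv1 : v1 = -u1 := by
      have := sqzero (u1+v1) (u0+v0) (by linarith); linarith
    subst hv0 hv1
    by_cases hpu : p0 = u0 ∧ p1 = u1
    · right
      obtain ⟨e3, e4⟩ := hpu
      have hqv : 0 < (q0-(-u0))^2+(q1-(-u1))^2 := by
        rcases hne1 with h | h
        · rw [e3, e4] at h; simp at h
        · exact h
      have hqu : 0 < (q0-u0)^2+(q1-u1)^2 := by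
        have h := hpq
        rw [e3, e4] at h
        exact sqswap u0 q0 u1 q1 h
      exact degcase r2 u0 u1 q0 q1 hr hu hq hqv hqu
    · by_cases hpv : p0 = -u0 ∧ p1 = -u1
      · right
        obtain ⟨e3, e4⟩ := hpv
        have hqu : 0 < (q0-u0)^2+(q1-u1)^2 := by
          rcases hne2 with h | h
          · rw [e3, e4] at h; simp at h
          · exact h
        have hqv : 0 < (q0-(-u0))^2+(q1-(-u1))^2 := by
          have h := hpq
          rw [e3, e4] at h
          exact sqswap (-u0) q0 (-u1) q1 h
        exact degcase r2 u0 u1 q0 q1 hr hu hq hqv hqu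
      · left
        have h1' : 0 < (p0-u0)^2+(p1-u1)^2 := possq hpu
        have h2' : 0 < (p0-(-u0))^2+(p1-(-u1))^2 := possq hpv
        exact degcase r2 u0 u1 p0 p1 hr hu hp h2' h1'

section Aux

open SimpleGraph

lemma edgeLen_mk (x y : Pt) : edgeLen s(x, y) = dist x y := rfl

lemma edgeLen_nonneg (e : Sym2 Pt) : 0 ≤ edgeLen e := by
  induction e using Sym2.ind with
  | _ x y => rw [edgeLen_mk]; exact dist_nonneg

lemma walk_avoid_aux {V : Type*} {G G' : SimpleGraph V} {u v : V}
    (hGG' : ∀ x y : V, G.Adj x y → G'.Adj x y ∨ (x = u ∧ y = v) ∨ (x = v ∧ y = u))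
    {w t : V} (p : G.Walk w t) :
    t = u → G'.Reachable w u ∨ G'.Reachable w v := by
  induction p with
  | nil => rintro rfl; exact Or.inl (SimpleGraph.Reachable.refl _)
  | cons hadj q ih =>
    intro ht
    rcases hGG' _ _ hadj with h' | ⟨rfl, rfl⟩ | ⟨rfl, rfl⟩
    · rcases ih ht with h1 | h1
      · exact Or.inl (h'.reachable.trans h1)
      · exact Or.inr (h'.reachable.trans h1)
    · exact Or.inl (SimpleGraph.Reachable.refl _)
    · exact Or.inr (SimpleGraph.Reachable.refl _)

lemma walk_avoid {V : Type*} {G G' : SimpleGraph V} {u v : V}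
    (hGG' : ∀ x y : V, G.Adj x y → G'.Adj x y ∨ (x = u ∧ y = v) ∨ (x = v ∧ y = u))
    {w : V} (h : G.Reachable w u) : G'.Reachable w u ∨ G'.Reachable w v := by
  obtain ⟨p⟩ := h
  exact walk_avoid_aux hGG' p rfl

lemma exchange_aux (R B P : Finset Pt) (E : Finset (Sym2 Pt))
    (hRBP : IsRBP R B P E)
    (u v w : Pt) (hEuv : s(u, v) ∈ E)
    (hu : u ∈ (↑(R ∪ P) : Set Pt)) (hv : v ∈ (↑(R ∪ P) : Set Pt))
    (hw : w ∈ (↑(R ∪ P) : Set Pt)) (hwP : w ∈ R ∪ B ∪ P)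
    (hnB : u ∉ (↑(B ∪ P) : Set Pt) ∨ v ∉ (↑(B ∪ P) : Set Pt))
    (hwv : w ≠ v)
    (hreach : ((graphOf (E.erase s(u, v))).induce (↑(R ∪ P) : Set Pt)).Reachable
      ⟨w, hw⟩ ⟨u, hu⟩) :
    IsRBP R B P (insert s(w, v) (E.erase s(u, v))) := by
  obtain ⟨hdiag, hmem, hconRP, hconBP⟩ := hRBP
  have hle : (graphOf (E.erase s(u, v))).induce (↑(R ∪ P) : Set Pt) ≤
      (graphOf (insert s(w, v) (E.erase s(u, v)))).induce (↑(R ∪ P) : Set Pt) := by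
    intro x y hxy
    exact (show _ ∧ _ from ⟨hxy.1, Finset.mem_insert_of_mem hxy.2⟩)
  refine ⟨?_, ?_, ?_, ?_⟩
  · intro e he
    rcases Finset.mem_insert.mp he with rfl | he'
    · rw [Sym2.mk_isDiag_iff]; exact hwv
    · exact hdiag e (Finset.mem_of_mem_erase he')
  · intro e he x hx
    rcases Finset.mem_insert.mp he with rfl | he'
    · rcases Sym2.mem_iff.mp hx with rfl | rfl
      · exact hwP
      · have hx' : x ∈ R ∪ P := Finset.mem_coe.mp hv
        rcases Finset.mem_union.mp hx' with h | h
        · exact Finset.mem_union.mpr (Or.inl (Finset.mem_union.mpr (Or.inl h)))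
        · exact Finset.mem_union.mpr (Or.inr h)
    · exact hmem e (Finset.mem_of_mem_erase he') x hx
  · rw [SimpleGraph.connected_iff]
    have hub : ∀ x : (↑(R ∪ P) : Set Pt),
        ((graphOf (insert s(w, v) (E.erase s(u, v)))).induce
          (↑(R ∪ P) : Set Pt)).Reachable x ⟨u, hu⟩ := by
      intro x
      have hx := hconRP.preconnected x ⟨u, hu⟩
      have hside : ∀ y z : (↑(R ∪ P) : Set Pt),
          ((graphOf E).induce (↑(R ∪ P) : Set Pt)).Adj y z →
          ((graphOf (E.erase s(u, v))).induce (↑(R ∪ P) : Set Pt)).Adj y z ∨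
          (y = ⟨u, hu⟩ ∧ z = ⟨v, hv⟩) ∨ (y = ⟨v, hv⟩ ∧ z = ⟨u, hu⟩) := by
        intro y z hyz
        rcases eq_or_ne s(y.val, z.val) s(u, v) with he | he
        · rcases Sym2.eq_iff.mp he with ⟨h1, h2⟩ | ⟨h1, h2⟩
          · exact Or.inr (Or.inl ⟨Subtype.ext h1, Subtype.ext h2⟩)
          · exact Or.inr (Or.inr ⟨Subtype.ext h1, Subtype.ext h2⟩)
        · exact Or.inl (show _ ∧ _ from ⟨hyz.1, Finset.mem_erase.mpr ⟨he, hyz.2⟩⟩)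
      rcases walk_avoid hside hx with h | h
      · exact h.mono hle
      · refine (h.mono hle).trans ?_
        have hadj : ((graphOf (insert s(w, v) (E.erase s(u, v)))).induce
            (↑(R ∪ P) : Set Pt)).Adj ⟨v, hv⟩ ⟨w, hw⟩ := by
          refine (show _ ∧ _ from ⟨Ne.symm hwv, ?_⟩)
          rw [Sym2.eq_swap]
          exact Finset.mem_insert_self _ _
        exact hadj.reachable.trans (hreach.mono hle)
    exact ⟨fun x y => (hub x).trans (hub y).symm, ⟨⟨u, hu⟩⟩⟩
  · have hle2 : (graphOf E).induce (↑(B ∪ P) : Set Pt) ≤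
        (graphOf (insert s(w, v) (E.erase s(u, v)))).induce (↑(B ∪ P) : Set Pt) := by
      intro x y hxy
      refine (show _ ∧ _ from ⟨hxy.1, ?_⟩)
      rcases eq_or_ne s(x.val, y.val) s(u, v) with he | he
      · exfalso
        rcases Sym2.eq_iff.mp he with ⟨h1, h2⟩ | ⟨h1, h2⟩
        · rcases hnB with h | h
          · exact h (h1 ▸ x.property)
          · exact h (h2 ▸ y.property)
        · rcases hnB with h | h
          · exact h (h2 ▸ y.property)
          · exact h (h1 ▸ x.property)
      · exact Finset.mem_insert_of_mem (Finset.mem_erase.mpr ⟨he, hxy.2⟩)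
    exact hconBP.mono hle2

lemma exchange (R B P : Finset Pt) (E : Finset (Sym2 Pt)) (hmin : IsMinRBP R B P E)
    (u v w : Pt) (hEuv : s(u, v) ∈ E)
    (hu : u ∈ R ∪ P) (hv : v ∈ R ∪ P) (hwp : w ∈ P)
    (hnB : u ∉ B ∪ P ∨ v ∉ B ∪ P)
    (hwu : dist w u < dist u v) (hwv : dist w v < dist u v) : False := by
  obtain ⟨hRBP, hminw⟩ := hmin
  have hu' : u ∈ (↑(R ∪ P) : Set Pt) := Finset.mem_coe.mpr hu
  have hv' : v ∈ (↑(R ∪ P) : Set Pt) := Finset.mem_coe.mpr hv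
  have hw' : w ∈ (↑(R ∪ P) : Set Pt) :=
    Finset.mem_coe.mpr (Finset.mem_union_right _ hwp)
  have hwP : w ∈ R ∪ B ∪ P := Finset.mem_union_right _ hwp
  have hnB' : u ∉ (↑(B ∪ P) : Set Pt) ∨ v ∉ (↑(B ∪ P) : Set Pt) := by
    rcases hnB with h | h
    · exact Or.inl fun hh => h (Finset.mem_coe.mp hh)
    · exact Or.inr fun hh => h (Finset.mem_coe.mp hh)
  have hwnev : w ≠ v := by
    intro h
    rw [h, _root_.dist_comm] at hwu
    exact lt_irrefl _ hwu
  have hwneu : w ≠ u := by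
    intro h
    rw [h] at hwv
    exact lt_irrefl _ hwv
  have hx := hRBP.2.2.1.preconnected ⟨w, hw'⟩ ⟨u, hu'⟩
  have hside : ∀ y z : (↑(R ∪ P) : Set Pt),
      ((graphOf E).induce (↑(R ∪ P) : Set Pt)).Adj y z →
      ((graphOf (E.erase s(u, v))).induce (↑(R ∪ P) : Set Pt)).Adj y z ∨
      (y = ⟨u, hu'⟩ ∧ z = ⟨v, hv'⟩) ∨ (y = ⟨v, hv'⟩ ∧ z = ⟨u, hu'⟩) := by
    intro y z hyz
    rcases eq_or_ne s(y.val, z.val) s(u, v) with he | he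
    · rcases Sym2.eq_iff.mp he with ⟨h1, h2⟩ | ⟨h1, h2⟩
      · exact Or.inr (Or.inl ⟨Subtype.ext h1, Subtype.ext h2⟩)
      · exact Or.inr (Or.inr ⟨Subtype.ext h1, Subtype.ext h2⟩)
    · exact Or.inl (show _ ∧ _ from ⟨hyz.1, Finset.mem_erase.mpr ⟨he, hyz.2⟩⟩)
  have hsum : weight (E.erase s(u, v)) + edgeLen s(u, v) = weight E :=
    Finset.sum_erase_add _ _ hEuv
  rcases walk_avoid hside hx with hr | hr
  · have hRBP' := exchange_aux R B P E hRBP u v w hEuv hu' hv' hw' hwP hnB' hwnev hr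
    have hle := hminw _ hRBP'
    have h2 : weight (insert s(w, v) (E.erase s(u, v))) ≤
        weight (E.erase s(u, v)) + edgeLen s(w, v) := by
      by_cases hin : s(w, v) ∈ E.erase s(u, v)
      · rw [Finset.insert_eq_self.mpr hin]
        have := edgeLen_nonneg s(w, v)
        linarith
      · rw [weight, Finset.sum_insert hin]
        rw [weight]
        linarith
    have h3 : edgeLen s(w, v) < edgeLen s(u, v) := by
      rw [edgeLen_mk, edgeLen_mk]; exact hwv
    linarith
  · have hswap : s(v, u) = s(u, v) := Sym2.eq_swap
    have hEvu : s(v, u) ∈ E := by rw [hswap]; exact hEuv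
    have hr' : ((graphOf (E.erase s(v, u))).induce (↑(R ∪ P) : Set Pt)).Reachable
        ⟨w, hw'⟩ ⟨v, hv'⟩ := by rw [hswap]; exact hr
    have hRBP' := exchange_aux R B P E hRBP v u w hEvu hv' hu' hw' hwP hnB'.symm hwneu hr'
    have hle := hminw _ hRBP'
    have h2 : weight (insert s(w, u) (E.erase s(v, u))) ≤
        weight (E.erase s(v, u)) + edgeLen s(w, u) := by
      by_cases hin : s(w, u) ∈ E.erase s(v, u)
      · rw [Finset.insert_eq_self.mpr hin]
        have := edgeLen_nonneg s(w, u)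
        linarith
      · rw [weight, Finset.sum_insert hin]
        rw [weight]
        linarith
    have h3 : edgeLen s(w, u) < edgeLen s(v, u) := by
      rw [edgeLen_mk, edgeLen_mk, _root_.dist_comm v u]; exact hwu
    rw [hswap] at h2 h3 hle
    linarith

lemma isRBP_comm {R B P : Finset Pt} {E : Finset (Sym2 Pt)} (h : IsRBP R B P E) :
    IsRBP B R P E := by
  obtain ⟨h1, h2, h3, h4⟩ := h
  refine ⟨h1, ?_, h4, h3⟩
  intro e he x hx
  have hh := h2 e he x hx
  simp only [Finset.mem_union] at hh ⊢
  tauto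

lemma isMinRBP_comm {R B P : Finset Pt} {E : Finset (Sym2 Pt)} (h : IsMinRBP R B P E) :
    IsMinRBP B R P E :=
  ⟨isRBP_comm h.1, fun E' hE' => h.2 E' (isRBP_comm hE')⟩

lemma dist_coord (x y : Pt) : dist x y = Real.sqrt ((x 0 - y 0)^2 + (x 1 - y 1)^2) := by
  rw [EuclideanSpace.dist_eq, Fin.sum_univ_two]
  congr 1
  rw [Real.dist_eq, Real.dist_eq, sq_abs, sq_abs]

lemma distsq_coord (x y : Pt) : dist x y ^ 2 = (x 0 - y 0)^2 + (x 1 - y 1)^2 := by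
  rw [dist_coord, Real.sq_sqrt (by positivity)]

lemma circ_coord {x c : Pt} {r : ℝ} (h : dist x c = r) :
    (x 0 - c 0)^2 + (x 1 - c 1)^2 = r^2 := by
  rw [← distsq_coord, h]

lemma dist_lt_dist_of_sq {x y z w : Pt}
    (h : (x 0 - y 0)^2 + (x 1 - y 1)^2 < (z 0 - w 0)^2 + (z 1 - w 1)^2) :
    dist x y < dist z w := by
  have h1 := distsq_coord x y
  have h2 := distsq_coord z w
  nlinarith [dist_nonneg (x := x) (y := y), dist_nonneg (x := z) (y := w)]

lemma pt_ne_coord {x y : Pt} (h : x ≠ y) : ¬ (x 0 = y 0 ∧ x 1 = y 1) := by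
  rintro ⟨h0, h1⟩
  exact h (PiLp.ext fun i => by fin_cases i <;> assumption)

set_option maxHeartbeats 1000000 in
lemma red_case (R B P : Finset Pt)
    (hRB : Disjoint R B) (hRP : Disjoint R P) (hBP : Disjoint B P)
    (ctr : Pt) (r : ℝ) (hr : 0 < r)
    (hcirc : ∀ q ∈ R ∪ B ∪ P, dist q ctr = r)
    (E : Finset (Sym2 Pt)) (hE : IsMinRBP R B P E)
    (u v : Pt) (hEuv : s(u, v) ∈ E) (hu : u ∈ R) (hv : v ∈ R ∪ P)
    (p p' : Pt) (hp : p ∈ P) (hp' : p' ∈ P) (hpp' : p ≠ p')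
    (hcross : Crosses u v p p') : False := by
  have huRBP : u ∈ R ∪ B ∪ P :=
    Finset.mem_union_left _ (Finset.mem_union_left _ hu)
  have hvRBP : v ∈ R ∪ B ∪ P := by
    rcases Finset.mem_union.mp hv with h | h
    · exact Finset.mem_union_left _ (Finset.mem_union_left _ h)
    · exact Finset.mem_union_right _ h
  have hpRBP : p ∈ R ∪ B ∪ P := Finset.mem_union_right _ hp
  have hp'RBP : p' ∈ R ∪ B ∪ P := Finset.mem_union_right _ hp'
  have Hu := circ_coord (hcirc u huRBP)
  have Hv := circ_coord (hcirc v hvRBP)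
  have Hp := circ_coord (hcirc p hpRBP)
  have Hp' := circ_coord (hcirc p' hp'RBP)
  have hne_uv : u ≠ v := fun h => (hE.1.1 _ hEuv) (Sym2.mk_isDiag_iff.mpr h)
  have hpu : p ≠ u := fun h => Finset.disjoint_left.mp hRP hu (h ▸ hp)
  have hp'u : p' ≠ u := fun h => Finset.disjoint_left.mp hRP hu (h ▸ hp')
  obtain ⟨z, hz1, hz2⟩ := hcross
  obtain ⟨a, b, ha, hb, hab, hzab⟩ := hz1
  obtain ⟨c, d, hc, hd, hcd, hzcd⟩ := hz2
  have key : a • u + b • v = c • p + d • p' := hzab.trans hzcd.symm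
  have key0 : a * u 0 + b * v 0 = c * p 0 + d * p' 0 := by
    have hk := congrArg (fun w : Pt => w 0) key
    simpa [PiLp.add_apply, PiLp.smul_apply, smul_eq_mul] using hk
  have key1 : a * u 1 + b * v 1 = c * p 1 + d * p' 1 := by
    have hk := congrArg (fun w : Pt => w 1) key
    simpa [PiLp.add_apply, PiLp.smul_apply, smul_eq_mul] using hk
  have H := heart (r^2) a b c d (u 0 - ctr 0) (u 1 - ctr 1) (v 0 - ctr 0) (v 1 - ctr 1)
    (p 0 - ctr 0) (p 1 - ctr 1) (p' 0 - ctr 0) (p' 1 - ctr 1)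
    (by positivity) Hu Hv Hp Hp' ha hb hab hc hd hcd
    (by linear_combination key0 + (ctr 0) * hcd - (ctr 0) * hab)
    (by linear_combination key1 + (ctr 1) * hcd - (ctr 1) * hab)
    (by nlinarith [possq (pt_ne_coord hne_uv)])
    (by nlinarith [possq (pt_ne_coord hpp')])
    (Or.inl (by nlinarith [possq (pt_ne_coord hpu)]))
    (Or.inr (by nlinarith [possq (pt_ne_coord hp'u)]))
  have hunB : u ∉ B ∪ P := by
    intro hm
    rcases Finset.mem_union.mp hm with h | h
    · exact Finset.disjoint_left.mp hRB hu h
    · exact Finset.disjoint_left.mp hRP hu h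
  have huRP : u ∈ R ∪ P := Finset.mem_union_left _ hu
  rcases H with ⟨h1, h2⟩ | ⟨h1, h2⟩
  · exact exchange R B P E hE u v p hEuv huRP hv hp (Or.inl hunB)
      (dist_lt_dist_of_sq (by nlinarith [h1])) (dist_lt_dist_of_sq (by nlinarith [h2]))
  · exact exchange R B P E hE u v p' hEuv huRP hv hp' (Or.inl hunB)
      (dist_lt_dist_of_sq (by nlinarith [h1])) (dist_lt_dist_of_sq (by nlinarith [h2]))

end Aux
/-- if all points lie on a common circle, then in a minimum RBP
spanning graph no red or blue edge crosses the segment joining any pair of purple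
points. -/
theorem circle_minRBP_red_blue_edge_crosses_no_purple_chord (R B P : Finset Pt)
    (hRB : Disjoint R B) (hRP : Disjoint R P) (hBP : Disjoint B P)
    (ctr : Pt) (r : ℝ) (hr : 0 < r)
    (hcirc : ∀ q ∈ R ∪ B ∪ P, dist q ctr = r)
    (E : Finset (Sym2 Pt)) (hE : IsMinRBP R B P E) :
    ∀ u v : Pt, s(u, v) ∈ E →
      ((u ∈ R ∧ v ∈ R ∪ P) ∨ (v ∈ R ∧ u ∈ R ∪ P) ∨
       (u ∈ B ∧ v ∈ B ∪ P) ∨ (v ∈ B ∧ u ∈ B ∪ P)) →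
      ∀ p ∈ P, ∀ p' ∈ P, p ≠ p' → ¬ Crosses u v p p' := by
  intro u v hEuv hcolor p hp p' hp' hpp' hcross
  have hswapE : s(v, u) ∈ E := by rw [Sym2.eq_swap]; exact hEuv
  have hswapC : Crosses v u p p' := by
    obtain ⟨z, h1, h2⟩ := hcross
    exact ⟨z, by rwa [openSegment_symm], h2⟩
  have hcirc' : ∀ q ∈ B ∪ R ∪ P, dist q ctr = r := by
    intro q hq
    apply hcirc
    simp only [Finset.mem_union] at hq ⊢
    tauto
  have hE' : IsMinRBP B R P E := isMinRBP_comm hE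
  rcases hcolor with ⟨h1, h2⟩ | ⟨h1, h2⟩ | ⟨h1, h2⟩ | ⟨h1, h2⟩
  · exact red_case R B P hRB hRP hBP ctr r hr hcirc E hE u v hEuv h1 h2 p p' hp hp' hpp' hcross
  · exact red_case R B P hRB hRP hBP ctr r hr hcirc E hE v u hswapE h1 h2 p p' hp hp' hpp' hswapC
  · exact red_case B R P hRB.symm hBP hRP ctr r hr hcirc' E hE' u v hEuv h1 h2 p p' hp hp' hpp' hcross
  · exact red_case B R P hRB.symm hBP hRP ctr r hr hcirc' E hE' v u hswapE h1 h2 p p' hp hp' hpp' hswapC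
end
end
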